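/- arXiv:0911.3060 — 7 statements merged into one kernel-verified Lean document; each statement's English description precedes it below -/
import Mathlib

section
/- Let p be an odd prime, a a positive integer, and m an integer not divisible by p. Then ∑_{k=0}^{(p^a−1)/2} C_k/m^k ≡ ((4−m)/2)·∑_{k=0}^{(p^a−1)/2} C(2k,k)/m^k + m/2 − 2p·δ_{a,1}·(−m/p) (mod p^2), where δ_{a,1} equals 1 if a = 1 and 0 otherwise, and where the congruence is between rational numbers whose denominators are coprime to p (i.e., it holds in the localization ℤ_(p)). -/
/-- `x ≡ y (mod p^n)` as rational numbers, i.e. in the localization `ℤ_(p)`. -/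
def ratModCast (p n : ℕ) (x y : ℚ) : Prop :=
  ∃ z : ℚ, x - y = (p : ℚ) ^ n * z ∧ ¬ (p ∣ z.den)

lemma aux_sum (m : ℚ) (hm : m ≠ 0) (n : ℕ) :
    ∑ k ∈ Finset.range (n+1), (catalan k : ℚ) / m ^ k
      = (4 - m) / 2 * ∑ k ∈ Finset.range (n+1), (Nat.choose (2*k) k : ℚ) / m ^ k
        + m / 2 - (Nat.choose (2*n+2) (n+1) : ℚ) / (2 * m ^ n) := by
  induction n with
  | zero => norm_num [catalan]; ring
  | succ n ih =>
    have h1 : ((n:ℚ) + 2) * (catalan (n+1) : ℚ) = (Nat.choose (2*(n+1)) (n+1) : ℚ) := by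
      have := succ_mul_catalan_eq_centralBinom (n+1)
      rw [Nat.centralBinom_eq_two_mul_choose] at this
      exact_mod_cast this
    have h2 : ((n:ℚ) + 2) * (Nat.choose (2*(n+2)) (n+2) : ℚ)
        = 2 * (2 * ((n:ℚ)+1) + 1) * (Nat.choose (2*(n+1)) (n+1) : ℚ) := by
      have := Nat.succ_mul_centralBinom_succ (n+1)
      rw [Nat.centralBinom_eq_two_mul_choose, Nat.centralBinom_eq_two_mul_choose] at this
      exact_mod_cast this
    have hcat : (catalan (n+1) : ℚ)
        = 2 * (Nat.choose (2*(n+1)) (n+1) : ℚ) - (Nat.choose (2*(n+2)) (n+2) : ℚ) / 2 := by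
      have hn2 : ((n:ℚ) + 2) ≠ 0 := by positivity
      apply mul_left_cancel₀ hn2
      linear_combination h1 + h2 / 2
    have h3 : (2*(n+1)+2 : ℕ) = 2*(n+2) := by ring
    rw [Finset.sum_range_succ, Finset.sum_range_succ
      (f := fun k => (Nat.choose (2*k) k : ℚ) / m ^ k), ih, h3, hcat]
    have hm' : m ^ n ≠ 0 := pow_ne_zero _ hm
    set S : ℚ := ∑ k ∈ Finset.range (n+1), (Nat.choose (2*k) k : ℚ) / m ^ k with hS
    field_simp
    ring

lemma choose_sub_one_mod (p : ℕ) (hp : p.Prime) [Fact p.Prime] :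
    ∀ k, k ≤ p - 1 → ((Nat.choose (p-1) k : ℕ) : ZMod p) = (-1)^k := by
  intro k hk
  induction k with
  | zero => simp
  | succ k ih =>
    have hk' : k ≤ p - 1 := le_of_lt (Nat.lt_of_succ_le hk)
    have h1 := Nat.choose_succ_right_eq (p-1) k
    have hkp : k + 1 < p := by have := hp.two_le; omega
    have hsub : ((p - 1 - k : ℕ) : ZMod p) = (-1 : ZMod p) - k := by
      have h2 : p - 1 - k = p - (1 + k) := by omega
      have h3 : 1 + k ≤ p := by omega
      rw [h2, Nat.cast_sub h3]
      push_cast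
      rw [ZMod.natCast_self p]
      ring
    have h1' := congrArg (Nat.cast : ℕ → ZMod p) h1
    push_cast at h1'
    rw [hsub, ih hk'] at h1'
    have hne : ((k : ZMod p) + 1) ≠ 0 := by
      have : (((k+1 : ℕ)) : ZMod p) ≠ 0 := by
        rw [Ne, ZMod.natCast_eq_zero_iff]
        intro hdvd
        exact absurd (Nat.le_of_dvd (Nat.succ_pos k) hdvd) (not_le.mpr hkp)
      push_cast at this
      exact this
    apply mul_right_cancel₀ hne
    rw [h1']
    ring

theorem sum_catalan_div_m (p : ℕ) (hp : p.Prime) (hp2 : p ≠ 2)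
    (a : ℕ) (ha : 0 < a) (m : ℤ) (hm : ¬ ((p : ℤ) ∣ m)) :
    ratModCast p 2
      (∑ k ∈ Finset.range ((p ^ a - 1) / 2 + 1),
        (catalan k : ℚ) / (m : ℚ) ^ k)
      ((4 - (m : ℚ)) / 2 *
          ∑ k ∈ Finset.range ((p ^ a - 1) / 2 + 1),
            (Nat.choose (2 * k) k : ℚ) / (m : ℚ) ^ k
        + (m : ℚ) / 2
        - 2 * p * (if a = 1 then (1 : ℚ) else 0) * (jacobiSym (-m) p : ℚ)) := by
  haveI : Fact p.Prime := ⟨hp⟩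
  have hple : 2 ≤ p := hp.two_le
  have hp3 : 3 ≤ p := by omega
  set n := (p ^ a - 1) / 2 with hn
  have hodd : Odd (p ^ a) := (hp.odd_of_ne_two hp2).pow
  have h2n : 2 * n + 1 = p ^ a := by
    obtain ⟨t, ht⟩ := hodd
    omega
  have hpa3 : 3 ≤ p ^ a := le_trans hp3 (Nat.le_self_pow ha.ne' p)
  have hn1 : 1 ≤ n := by omega
  obtain ⟨n', hn'⟩ : ∃ n', n = n' + 1 := ⟨n - 1, by omega⟩
  have hpn : ¬ p ∣ n := by
    intro hdvd
    have h1 : p ∣ p ^ a := dvd_pow_self p ha.ne'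
    have h2 : p ∣ 1 := by
      have h3 := Nat.dvd_sub h1 (hdvd.mul_left 2)
      rwa [show p ^ a - 2 * n = 1 by omega] at h3
    have := Nat.le_of_dvd one_pos h2
    omega
  have hkey : p ^ a * Nat.choose (2*n) n' = Nat.choose (2*n+1) n * n := by
    have h := Nat.add_one_mul_choose_eq (2*n) n'
    rw [← hn'] at h
    rw [← h2n]
    exact h
  have hdvd_c : p ^ a ∣ Nat.choose (2*n+1) n :=
    (Nat.Coprime.pow_left a (hp.coprime_iff_not_dvd.mpr hpn)).dvd_of_dvd_mul_right
      ⟨_, hkey.symm⟩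
  have hc2 : Nat.choose (2*n+2) (n+1) = 2 * Nat.choose (2*n+1) n := by
    have hs : Nat.choose (2*n+1) n = Nat.choose (2*n+1) (n+1) := by
      have h := Nat.choose_symm (show n+1 ≤ 2*n+1 by omega)
      rwa [show 2*n+1-(n+1) = n by omega] at h
    rw [show 2*n+2 = (2*n+1)+1 by omega, Nat.choose_succ_succ']
    omega
  have hmQ : (m : ℚ) ≠ 0 := by
    simp only [Ne, Int.cast_eq_zero]
    rintro rfl
    exact hm (dvd_zero _)
  have hmn : (m : ℚ) ^ n ≠ 0 := pow_ne_zero _ hmQ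
  have hpQ : (p : ℚ) ≠ 0 := by positivity
  have hpZ : Prime (p : ℤ) := Nat.prime_iff_prime_int.1 hp
  have hsum := aux_sum (m : ℚ) hmQ n
  by_cases ha1 : a = 1
  · -- case a = 1
    subst ha1
    have hp1 : 2 * n + 1 = p := by rw [← Nat.pow_one p]; exact h2n
    set J : ℤ := jacobiSym (-m) p with hJdef
    set B : ℤ := (Nat.choose (2*n) n' : ℤ) with hBdef
    set K : ℤ := 2 * J * n * m ^ n - B with hKdef
    have hm0 : (m : ZMod p) ≠ 0 := by
      rw [Ne, ZMod.intCast_zmod_eq_zero_iff_dvd]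
      exact hm
    have hJ : ((J : ℤ) : ZMod p) = (-1)^n * (m : ZMod p)^n := by
      rw [hJdef, show jacobiSym (-m) p = legendreSym p (-m) from
        (jacobiSym.legendreSym.to_jacobiSym p (-m)).symm, legendreSym.eq_pow]
      push_cast
      rw [show p / 2 = n from by omega]
      ring
    have hB : ((B : ℤ) : ZMod p) = (-1)^n' := by
      rw [hBdef]
      have h := choose_sub_one_mod p hp n' (by omega)
      rw [show p - 1 = 2*n from by omega] at h
      push_cast
      exact h
    have e1 : (m : ZMod p)^n * (m : ZMod p)^n = 1 := by
      have h := ZMod.pow_card_sub_one_eq_one hm0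
      rw [show p - 1 = 2*n from by omega, two_mul, pow_add] at h
      exact h
    have hpow : ((-1 : ZMod p))^n = -(-1 : ZMod p)^n' := by
      rw [hn', pow_succ]; ring
    have hn2 : 2 * ((n : ℕ) : ZMod p) = -1 := by
      have h : ((2*n+1 : ℕ) : ZMod p) = ((p : ℕ) : ZMod p) := by rw [hp1]
      rw [ZMod.natCast_self] at h
      push_cast at h
      linear_combination h
    have hpK : (p : ℤ) ∣ K := by
      have h0 : ((K : ℤ) : ZMod p) = 0 := by
        have hstep : ((K : ℤ) : ZMod p)
            = 2 * ((n : ℕ) : ZMod p) * (((-1 : ZMod p))^n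
                * ((m : ZMod p)^n * (m : ZMod p)^n)) - (-1 : ZMod p)^n' := by
          rw [hKdef]
          push_cast
          rw [hJ, hB]
          ring
        rw [hstep, e1, hpow]
        linear_combination (-((-1 : ZMod p))^n') * hn2
      exact (ZMod.intCast_zmod_eq_zero_iff_dvd K p).mp h0
    obtain ⟨K', hK'⟩ := hpK
    refine ⟨(K' : ℚ) / (((n : ℤ) * m ^ n : ℤ) : ℚ), ?_, ?_⟩
    · rw [hsum]
      simp only [if_pos rfl, mul_one]
      have hkeyQ : (Nat.choose (2*n+1) n : ℚ) * (n : ℚ) = (p : ℚ) * (B : ℚ) := by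
        have h := hkey
        rw [pow_one] at h
        rw [hBdef]
        exact_mod_cast h.symm
      have hc2Q : (Nat.choose (2*n+2) (n+1) : ℚ) = 2 * (Nat.choose (2*n+1) n : ℚ) := by
        exact_mod_cast hc2
      have hKQ : 2 * (J : ℚ) * (n : ℚ) * (m : ℚ) ^ n - (B : ℚ) = (p : ℚ) * (K' : ℚ) := by
        have h : (K : ℚ) = ((p : ℤ) * K' : ℤ) := by exact_mod_cast congrArg (Int.cast : ℤ → ℚ) hK'
        rw [hKdef] at h
        push_cast at h
        exact h
      have hnQ : ((n : ℕ) : ℚ) ≠ 0 := by positivity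
      push_cast
      have hCn : (Nat.choose (2*n+1) n : ℚ) = (p : ℚ) * (B : ℚ) / (n : ℚ) := by
        rw [eq_div_iff hnQ]; exact hkeyQ
      have hBQ : (B : ℚ) = 2 * (J : ℚ) * (n : ℚ) * (m : ℚ) ^ n - (p : ℚ) * (K' : ℚ) := by
        linear_combination -hKQ
      rw [hc2Q, hCn, hBQ]
      field_simp
      ring
    · intro hdvd
      have hden := Rat.den_dvd (K') ((n : ℤ) * m ^ n)
      rw [Rat.divInt_eq_div] at hden
      have h2 : (p : ℤ) ∣ (n : ℤ) * m ^ n := dvd_trans (Int.natCast_dvd_natCast.mpr hdvd) hden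
      rcases hpZ.dvd_mul.mp h2 with h3 | h3
      · exact hpn (Int.natCast_dvd_natCast.mp (by exact_mod_cast h3))
      · exact hm (hpZ.dvd_of_dvd_pow h3)
  · -- case a ≥ 2
    have ha2 : 2 ≤ a := by omega
    have hp2a : p ^ 2 ∣ Nat.choose (2*n+1) n := dvd_trans (pow_dvd_pow p ha2) hdvd_c
    obtain ⟨d, hd⟩ := hp2a
    refine ⟨((-(d : ℤ) : ℤ) : ℚ) / ((m ^ n : ℤ) : ℚ), ?_, ?_⟩
    · rw [hsum]
      simp only [if_neg ha1, mul_zero, zero_mul]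
      have hdQ : (Nat.choose (2*n+1) n : ℚ) = (p : ℚ)^2 * (d : ℚ) := by exact_mod_cast hd
      have hc2Q : (Nat.choose (2*n+2) (n+1) : ℚ) = 2 * (Nat.choose (2*n+1) n : ℚ) := by
        exact_mod_cast hc2
      push_cast
      rw [hc2Q, hdQ]
      field_simp
      ring
    · intro hdvd
      have hden := Rat.den_dvd (-(d : ℤ)) (m ^ n)
      rw [Rat.divInt_eq_div] at hden
      have h2 : (p : ℤ) ∣ m ^ n := dvd_trans (Int.natCast_dvd_natCast.mpr hdvd) hden
      exact hm (hpZ.dvd_of_dvd_pow h2)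
end

section
/- Let p be an odd prime, a a positive integer, and k an integer with 0 ≤ k ≤ (p^a−1)/2. Then C((p^a−1)/2 + k, 2k) − C(2k,k)/(−16)^k ≡ (−1)^{k−1}·(−1/p^a)·C(p^a−1−2k, (p^a−1)/2−k)·∑_{j=1}^{k} p^{2a}/(2j−1)^2 (mod p^3), where the congruence is between rational numbers whose denominators are coprime to p (i.e., it holds in the localization ℤ_(p)). -/
open Finset

namespace BDC
variable {p : ℕ} [hp : Fact p.Prime]

lemma den_not_dvd_iff (r : ℚ) : ¬ p ∣ r.den ↔ padicNorm p r ≤ 1 := by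
  constructor
  · intro h
    rw [← Rat.num_div_den r, padicNorm.div]
    have h1 : padicNorm p (r.den : ℚ) = 1 := (padicNorm.nat_eq_one_iff r.den).2 h
    rw [h1, div_one]
    exact padicNorm.of_int r.num
  · intro h hd
    have hnum : padicNorm p (r.num : ℚ) = 1 := by
      rw [padicNorm.int_eq_one_iff]
      intro hn
      have h1 : p ∣ r.num.natAbs := by
        have := Int.natAbs_dvd_natAbs.2 hn
        simpa using this
      have h2 := Nat.dvd_gcd h1 hd
      have h3 := r.reduced
      unfold Nat.Coprime at h3
      rw [h3] at h2
      exact hp.out.one_lt.ne' (Nat.dvd_one.mp h2)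
    have hden : padicNorm p (r.den : ℚ) < 1 := (padicNorm.nat_lt_one_iff r.den).2 hd
    have hr0 : r ≠ 0 := by
      intro h0; rw [h0] at hd; simp at hd
      exact hp.out.one_lt.ne' hd
    have hdpos : (0:ℚ) < padicNorm p (r.den : ℚ) := by
      have : ((r.den : ℚ)) ≠ 0 := by exact_mod_cast r.den_nz
      have := padicNorm.nonzero (p := p) this
      rcases lt_or_eq_of_le (padicNorm.nonneg (p := p) ((r.den : ℚ))) with h'|h'
      · exact h'
      · exact absurd h'.symm this
    have : padicNorm p r = padicNorm p (r.num : ℚ) / padicNorm p (r.den : ℚ) := by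
      rw [← padicNorm.div, Rat.num_div_den]
    rw [this, hnum] at h
    have : padicNorm p (r.den : ℚ) ≥ 1 := by
      rw [ge_iff_le, ← div_le_one hdpos] at *
      exact le_trans (by norm_num) h
    linarith

lemma norm_p_pow (t : ℕ) : padicNorm p ((p:ℚ)^t) = (p:ℚ)^(-(t:ℤ)) := by
  induction t with
  | zero => simp
  | succ n ih =>
    rw [pow_succ, padicNorm.mul, ih, padicNorm.padicNorm_p_of_prime]
    rw [show (-(↑(n+1):ℤ)) = -(n:ℤ) + (-1) from by push_cast; ring, zpow_add₀, zpow_neg_one]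
    exact_mod_cast hp.out.pos.ne'

lemma ratModCast_iff (n : ℕ) (x y : ℚ) :
    ratModCast p n x y ↔ padicNorm p (x - y) ≤ (p:ℚ)^(-(n:ℤ)) := by
  have hppos : (0:ℚ) < (p:ℚ) := by exact_mod_cast hp.out.pos
  constructor
  · rintro ⟨z, hz, hden⟩
    rw [hz, padicNorm.mul, norm_p_pow]
    calc (p:ℚ)^(-(n:ℤ)) * padicNorm p z ≤ (p:ℚ)^(-(n:ℤ)) * 1 := by
          apply mul_le_mul_of_nonneg_left ((den_not_dvd_iff z).1 hden) (le_of_lt (zpow_pos hppos _))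
      _ = (p:ℚ)^(-(n:ℤ)) := mul_one _
  · intro h
    refine ⟨(x - y) / (p:ℚ)^n, by field_simp, ?_⟩
    rw [den_not_dvd_iff, padicNorm.div, norm_p_pow, div_le_one (zpow_pos hppos _)] at *
    calc padicNorm p (x-y) ≤ (p:ℚ)^(-(n:ℤ)) := h
      _ ≤ _ := le_refl _



lemma telescope (x y : ℕ → ℚ) (k : ℕ) :
    (∏ i ∈ range k, x i) - ∏ i ∈ range k, y i =
      ∑ j ∈ range k, (x j - y j) * (∏ i ∈ range j, x i) * ∏ i ∈ Ico (j+1) k, y i := by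
  induction k with
  | zero => simp
  | succ k ih =>
    rw [Finset.sum_range_succ, Finset.prod_range_succ, Finset.prod_range_succ]
    have hsum : ∑ j ∈ range k, (x j - y j) * (∏ i ∈ range j, x i) * ∏ i ∈ Ico (j+1) (k+1), y i
        = (∑ j ∈ range k, (x j - y j) * (∏ i ∈ range j, x i) * ∏ i ∈ Ico (j+1) k, y i) * y k := by
      rw [Finset.sum_mul]
      apply Finset.sum_congr rfl
      intro j hj
      rw [Finset.prod_Ico_succ_top (Nat.succ_le_of_lt (Finset.mem_range.1 hj))]
      ring
    rw [hsum, ← ih]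
    simp [Finset.Ico_self]
    ring

lemma prod_split (f : ℕ → ℚ) {j k : ℕ} (h : j < k) :
    ∏ i ∈ range k, f i = ((∏ i ∈ range j, f i) * f j) * ∏ i ∈ Ico (j+1) k, f i := by
  rw [← Finset.prod_range_succ]
  exact (Finset.prod_range_mul_prod_Ico f (Nat.succ_le_of_lt h)).symm

lemma norm_prod (f : ℕ → ℚ) (s : Finset ℕ) :
    padicNorm p (∏ i ∈ s, f i) = ∏ i ∈ s, padicNorm p (f i) := by
  classical
  induction s using Finset.cons_induction with
  | empty => simp
  | cons a s ha ih => rw [Finset.prod_cons, Finset.prod_cons, padicNorm.mul, ih]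

lemma norm_pos {x : ℚ} (hx : x ≠ 0) : 0 < padicNorm p x :=
  lt_of_le_of_ne (padicNorm.nonneg x) (Ne.symm (padicNorm.nonzero hx))

lemma norm_sub_eq {b c : ℚ} (h : padicNorm p b < padicNorm p c) :
    padicNorm p (c - b) = padicNorm p c := by
  have : c - b = c + (-b) := by ring
  rw [this, padicNorm.add_eq_max_of_ne]
  · rw [padicNorm.neg]
    exact max_eq_left (le_of_lt h)
  · rw [padicNorm.neg]
    exact (ne_of_lt h).symm

/-- Lower bound for the norm of a positive natural `< p^a`. -/
lemma norm_nat_lower {a x : ℕ} (hx : 0 < x) (hxa : x < p^a) :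
    (p:ℚ)^(1-(a:ℤ)) ≤ padicNorm p (x:ℚ) := by
  have hx0 : (x:ℚ) ≠ 0 := by exact_mod_cast hx.ne'
  have hp1 : (1:ℚ) < p := by exact_mod_cast hp.out.one_lt
  have hv : padicValRat p (x:ℚ) = (padicValNat p x : ℤ) := padicValRat.of_nat
  have hvlt : padicValNat p x < a := by
    by_contra hge
    push_neg at hge
    have : p ^ a ∣ x := dvd_trans (pow_dvd_pow p hge) (pow_padicValNat_dvd)
    exact absurd (Nat.le_of_dvd hx this) (not_le.2 hxa)
  rw [padicNorm.eq_zpow_of_nonzero hx0, hv]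
  apply zpow_le_zpow_right₀ (le_of_lt hp1)
  omega

lemma prod_odd (t : ℕ) :
    (2:ℚ)^t * (Nat.factorial t) * ∏ i ∈ range t, (2*(i:ℚ)+1) = Nat.factorial (2*t) := by
  induction t with
  | zero => simp
  | succ t ih =>
    rw [Finset.prod_range_succ, show 2*(t+1) = 2*t+1+1 from by ring, Nat.factorial_succ,
      Nat.factorial_succ, Nat.factorial_succ, pow_succ]
    push_cast
    push_cast at ih
    linear_combination (2*((t:ℚ)+1)*(2*(t:ℚ)+1)) * ih

lemma cast_central (t : ℕ) :
    (Nat.choose (2*t) t : ℚ) * (Nat.factorial t) * (Nat.factorial t) = Nat.factorial (2*t) := by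
  have := Nat.choose_mul_factorial_mul_factorial (show t ≤ 2*t by omega)
  have h2 : 2*t - t = t := by omega
  rw [h2] at this
  exact_mod_cast congrArg (Nat.cast : ℕ → ℚ) this

lemma cast_desc (m t : ℕ) (h : t ≤ m) :
    (Nat.choose m t : ℚ) * (Nat.factorial t) = ∏ i ∈ range t, ((m:ℚ) - i) := by
  induction t with
  | zero => simp
  | succ t ih =>
    rw [Finset.prod_range_succ, ← ih (le_trans (Nat.le_succ t) h)]
    have key := Nat.choose_succ_right_eq m t
    have hc : ((Nat.choose m (t+1)) * (t+1) : ℚ) = (Nat.choose m t : ℚ) * ((m:ℚ) - t) := by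
      have : ((m - t : ℕ) : ℚ) = (m:ℚ) - t := by
        have : t ≤ m := le_trans (Nat.le_succ t) h
        push_cast [this]; ring
      rw [← this]
      exact_mod_cast congrArg (Nat.cast : ℕ → ℚ) key
    rw [Nat.factorial_succ]
    push_cast
    push_cast at hc
    linear_combination ((Nat.factorial t : ℚ)) * hc

lemma chooseId (m k : ℕ) (h : k + 1 ≤ m) :
    (2*k+2) * ((2*k+1) * Nat.choose (m+k+1) (2*k+2)) =
      (m-k) * ((m+k+1) * Nat.choose (m+k) (2*k)) := by
  have h1 : Nat.choose (m+k+1) (2*k+1+1) * (2*k+1+1) = Nat.choose (m+k+1) (2*k+1) * ((m+k+1) - (2*k+1)) :=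
    Nat.choose_succ_right_eq (m+k+1) (2*k+1)
  have h2 : (m+k+1) * Nat.choose (m+k) (2*k) = Nat.choose (m+k+1) (2*k+1) * (2*k+1) := by
    have := Nat.add_one_mul_choose_eq (m+k) (2*k)
    simpa [Nat.succ_eq_add_one] using this
  have h3 : (m+k+1) - (2*k+1) = m - k := by omega
  rw [h3] at h1
  calc (2*k+2) * ((2*k+1) * Nat.choose (m+k+1) (2*k+2))
      = (2*k+1) * (Nat.choose (m+k+1) (2*k+1+1) * (2*k+1+1)) := by ring_nf
    _ = (2*k+1) * (Nat.choose (m+k+1) (2*k+1) * (m-k)) := by rw [h1]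
    _ = (m-k) * (Nat.choose (m+k+1) (2*k+1) * (2*k+1)) := by ring
    _ = (m-k) * ((m+k+1) * Nat.choose (m+k) (2*k)) := by rw [← h2]

lemma prodA (m : ℕ) : ∀ k, k ≤ m →
    (4:ℚ)^k * (Nat.factorial (2*k)) * (Nat.choose (m+k) (2*k)) =
      ∏ i ∈ range k, ((2*(m:ℚ)+1)^2 - (2*(i:ℚ)+1)^2) := by
  intro k
  induction k with
  | zero => simp
  | succ k ih =>
    intro hk
    have hk' : k ≤ m := le_trans (Nat.le_succ k) hk
    rw [Finset.prod_range_succ, ← ih hk']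
    have key := chooseId m k hk
    have hmk : ((m - k : ℕ) : ℚ) = (m:ℚ) - k := by push_cast [hk']; ring
    have keyQ : ((2*k+2) * ((2*k+1) * Nat.choose (m+k+1) (2*k+2)) : ℚ)
        = ((m:ℚ)-k) * ((m+k+1) * Nat.choose (m+k) (2*k)) := by
      rw [← hmk]
      exact_mod_cast congrArg (Nat.cast : ℕ → ℚ) key
    have hfac : (Nat.factorial (2*(k+1)) : ℚ) = (2*k+2) * ((2*k+1) * Nat.factorial (2*k)) := by
      rw [show 2*(k+1) = 2*k+1+1 from by ring, Nat.factorial_succ, Nat.factorial_succ]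
      push_cast; ring
    have hch : ((Nat.choose (m+k+1) (2*k+2)) : ℚ) = (Nat.choose (m+(k+1)) (2*(k+1)) : ℚ) := by
      norm_num; ring_nf
    rw [hfac, ← hch]
    push_cast
    push_cast at keyQ
    linear_combination (4*(4:ℚ)^k*((Nat.factorial (2*k)):ℚ)) * keyQ
end BDC

open Finset
namespace BDC
variable {p : ℕ} [hp : Fact p.Prime]

lemma hp1Q : (1:ℚ) < p := by exact_mod_cast hp.out.one_lt
lemma hp0Q : (0:ℚ) < p := by exact_mod_cast hp.out.pos

lemma norm_q {a m : ℕ} {i : ℕ} (hm : 2*m+1 = p^a) (hi : i < m) :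
    (p:ℚ)^(1-(a:ℤ)) ≤ padicNorm p (2*(i:ℚ)+1) := by
  have h : (2*(i:ℚ)+1) = ((2*i+1 : ℕ):ℚ) := by push_cast; ring
  rw [h]
  exact norm_nat_lower (by omega) (by omega)

lemma norm_q_pos {i : ℕ} : 0 < padicNorm p (2*(i:ℚ)+1) := by
  apply norm_pos
  have h : (2*(i:ℚ)+1) = ((2*i+1 : ℕ):ℚ) := by push_cast; ring
  rw [h]
  exact_mod_cast Nat.succ_ne_zero (2*i)

lemma norm_q_sub {a m : ℕ} {i : ℕ} (hm : 2*m+1 = p^a) (hi : i < m) :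
    padicNorm p ((2*(i:ℚ)+1) - (p:ℚ)^a) = padicNorm p (2*(i:ℚ)+1) := by
  apply norm_sub_eq
  rw [norm_p_pow]
  calc (p:ℚ)^(-(a:ℤ)) < (p:ℚ)^(1-(a:ℤ)) := by
        apply zpow_lt_zpow_right₀ hp1Q; omega
    _ ≤ _ := norm_q hm hi

lemma norm_nat_le_one (x : ℕ) : padicNorm p (x:ℚ) ≤ 1 := padicNorm.of_nat x

lemma norm_not_dvd {x : ℕ} (h : ¬ p ∣ x) : padicNorm p (x:ℚ) = 1 :=
  (padicNorm.nat_eq_one_iff x).2 h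

lemma norm_two_pow (hp2 : p ≠ 2) (s : ℕ) : padicNorm p ((2:ℚ)^s) = 1 := by
  have hh : ((2:ℚ)^s) = ((2^s : ℕ):ℚ) := by push_cast; ring
  rw [hh]
  apply norm_not_dvd
  intro hd
  exact hp2 ((Nat.prime_dvd_prime_iff_eq hp.out Nat.prime_two).1 (hp.out.dvd_of_dvd_pow hd))

lemma norm_four_pow (hp2 : p ≠ 2) (s : ℕ) : padicNorm p ((4:ℚ)^s) = 1 := by
  have hh : ((4:ℚ)^s) = (2:ℚ)^(2*s) := by rw [pow_mul]; norm_num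
  rw [hh]; exact norm_two_pow hp2 _

lemma norm_sixteen_pow (hp2 : p ≠ 2) (s : ℕ) : padicNorm p ((16:ℚ)^s) = 1 := by
  have hh : ((16:ℚ)^s) = (2:ℚ)^(4*s) := by rw [pow_mul]; norm_num
  rw [hh]; exact norm_two_pow hp2 _

lemma norm_neg_one_pow (s : ℕ) : padicNorm p ((-1:ℚ)^s) = 1 := by
  rcases Nat.even_or_odd s with h | h
  · rw [h.neg_one_pow]; exact padicNorm.one
  · rw [h.neg_one_pow, padicNorm.neg]; exact padicNorm.one

/-- Key congruence: `C(2t,t) ≡ (-4)^t C(m,t) [p]` for `t ≤ m`, `2m+1 = p^a`. -/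
lemma keyA {a m : ℕ} (hp2 : p ≠ 2) (hm : 2*m+1 = p^a) {t : ℕ} (ht : t ≤ m) :
    padicNorm p ((Nat.choose (2*t) t : ℚ) - (-4:ℚ)^t * (Nat.choose m t : ℚ)) ≤ (p:ℚ)^(-1:ℤ) := by
  set X : ℚ := (Nat.choose (2*t) t : ℚ) with hX
  set L : ℚ := (Nat.choose m t : ℚ) with hL
  set N : ℚ := (p:ℚ)^a with hN
  set q : ℕ → ℚ := fun i => 2*(i:ℚ)+1 with hq
  have hfac0 : ((t.factorial : ℚ)) ≠ 0 := by exact_mod_cast t.factorial_ne_zero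
  have h1 : X * (t.factorial : ℚ) = (2:ℚ)^t * ∏ i ∈ range t, q i := by
    apply mul_right_cancel₀ hfac0
    linear_combination cast_central t - prod_odd t
  have key1 : (t.factorial : ℚ) * (X - (-4:ℚ)^t * L)
      = (2:ℚ)^t * ((∏ i ∈ range t, q i) - ∏ i ∈ range t, (q i - N)) := by
    have h3 : (-4:ℚ)^t * L * (t.factorial : ℚ) = (2:ℚ)^t * ∏ i ∈ range t, (q i - N) := by
      have hd := cast_desc m t ht
      have hNm : N = 2*(m:ℚ)+1 := by
        rw [hN]
        exact_mod_cast congrArg (Nat.cast : ℕ → ℚ) hm.symm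
      calc (-4:ℚ)^t * L * (t.factorial : ℚ) = (-4:ℚ)^t * (L * (t.factorial : ℚ)) := by ring
        _ = (-4:ℚ)^t * ∏ i ∈ range t, ((m:ℚ) - i) := by rw [hd]
        _ = ∏ i ∈ range t, ((-4:ℚ) * ((m:ℚ) - i)) := by
            rw [Finset.prod_mul_distrib, Finset.prod_const, Finset.card_range]
        _ = ∏ i ∈ range t, ((2:ℚ) * (q i - N)) := by
            apply Finset.prod_congr rfl
            intro i _
            rw [hq, hNm]; ring
        _ = (2:ℚ)^t * ∏ i ∈ range t, (q i - N) := by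
            rw [Finset.prod_mul_distrib, Finset.prod_const, Finset.card_range]
    linear_combination h1 - h3
  have key2 : (∏ i ∈ range t, q i) - ∏ i ∈ range t, (q i - N)
      = ∑ j ∈ range t, (N * ∏ i ∈ range j, q i) * ∏ i ∈ Ico (j+1) t, (q i - N) := by
    have h := telescope q (fun i => q i - N) t
    simpa [sub_sub_cancel] using h
  have key3 : padicNorm p ((∏ i ∈ range t, q i) - ∏ i ∈ range t, (q i - N))
      ≤ (p:ℚ)^(-1:ℤ) * padicNorm p (∏ i ∈ range t, q i) := by
    rw [key2]
    apply padicNorm.sum_le'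
    · intro j hj
      have hjt : j < t := Finset.mem_range.1 hj
      rw [padicNorm.mul, padicNorm.mul, norm_p_pow, norm_prod, norm_prod]
      have hsub : ∏ i ∈ Ico (j+1) t, padicNorm p (q i - N) = ∏ i ∈ Ico (j+1) t, padicNorm p (q i) := by
        apply Finset.prod_congr rfl
        intro i hi
        have hi2 : i < t := (Finset.mem_Ico.1 hi).2
        exact norm_q_sub hm (lt_of_lt_of_le hi2 ht)
      rw [hsub]
      have hqj0 : (0:ℚ) < padicNorm p (q j) := norm_q_pos
      have hsplit : (∏ i ∈ range j, padicNorm p (q i)) * ∏ i ∈ Ico (j+1) t, padicNorm p (q i)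
          = padicNorm p (∏ i ∈ range t, q i) / padicNorm p (q j) := by
        rw [norm_prod, prod_split (fun i => padicNorm p (q i)) hjt, eq_div_iff (ne_of_gt hqj0)]
        ring
      have hqj : (p:ℚ)^(1-(a:ℤ)) ≤ padicNorm p (q j) := norm_q hm (lt_of_lt_of_le hjt ht)
      have hprodnn : (0:ℚ) ≤ padicNorm p (∏ i ∈ range t, q i) := padicNorm.nonneg _
      calc (p:ℚ)^(-(a:ℤ)) * (∏ i ∈ range j, padicNorm p (q i)) * ∏ i ∈ Ico (j+1) t, padicNorm p (q i)
          = (p:ℚ)^(-(a:ℤ)) * (padicNorm p (∏ i ∈ range t, q i) / padicNorm p (q j)) := by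
            rw [mul_assoc, hsplit]
        _ ≤ (p:ℚ)^(-(a:ℤ)) * (padicNorm p (∏ i ∈ range t, q i) / (p:ℚ)^(1-(a:ℤ))) := by
            apply mul_le_mul_of_nonneg_left _ (le_of_lt (zpow_pos hp0Q _))
            apply div_le_div_of_nonneg_left hprodnn (zpow_pos hp0Q _) hqj
        _ = (p:ℚ)^(-1:ℤ) * padicNorm p (∏ i ∈ range t, q i) := by
            rw [div_eq_mul_inv, ← zpow_neg, mul_comm (padicNorm p _), ← mul_assoc,
              ← zpow_add₀ (ne_of_gt hp0Q), show (-(a:ℤ)) + (-(1-(a:ℤ))) = -1 from by ring]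
    · exact mul_nonneg (le_of_lt (zpow_pos hp0Q _)) (padicNorm.nonneg _)
  have hnorm1 : padicNorm p ((t.factorial : ℚ)) * padicNorm p (X - (-4:ℚ)^t * L)
      ≤ (p:ℚ)^(-1:ℤ) * padicNorm p (∏ i ∈ range t, q i) := by
    rw [← padicNorm.mul, key1, padicNorm.mul, norm_two_pow hp2, one_mul]
    exact key3
  have hprodq : padicNorm p (∏ i ∈ range t, q i) ≤ padicNorm p ((t.factorial:ℚ)) := by
    have h3 := congrArg (padicNorm p) h1
    rw [padicNorm.mul, padicNorm.mul, norm_two_pow hp2, one_mul] at h3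
    rw [← h3]
    calc padicNorm p X * padicNorm p ((t.factorial:ℚ)) ≤ 1 * padicNorm p ((t.factorial:ℚ)) := by
          apply mul_le_mul_of_nonneg_right _ (padicNorm.nonneg _)
          exact norm_nat_le_one _
      _ = _ := one_mul _
  have hfnorm : 0 < padicNorm p ((t.factorial:ℚ)) := norm_pos (by exact_mod_cast t.factorial_ne_zero)
  have hfin : padicNorm p ((t.factorial:ℚ)) * padicNorm p (X - (-4:ℚ)^t * L)
      ≤ padicNorm p ((t.factorial:ℚ)) * (p:ℚ)^(-1:ℤ) := by
    calc padicNorm p ((t.factorial:ℚ)) * padicNorm p (X - (-4:ℚ)^t * L)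
        ≤ (p:ℚ)^(-1:ℤ) * padicNorm p (∏ i ∈ range t, q i) := hnorm1
      _ ≤ (p:ℚ)^(-1:ℤ) * padicNorm p ((t.factorial:ℚ)) := by
          apply mul_le_mul_of_nonneg_left hprodq (le_of_lt (zpow_pos hp0Q _))
      _ = padicNorm p ((t.factorial:ℚ)) * (p:ℚ)^(-1:ℤ) := mul_comm _ _
  exact le_of_mul_le_mul_left hfin hfnorm
end BDC

open Finset
namespace BDC
variable {p : ℕ} [hp : Fact p.Prime]

lemma fermat (hp2 : p ≠ 2) {a m : ℕ} (ha : 0 < a) (hm : 2*m+1 = p^a) :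
    padicNorm p (1 - (4:ℚ)^m) ≤ (p:ℚ)^(-1:ℤ) := by
  -- p ∣ 4^m - 1 over ℤ
  have hdvd : ((p:ℤ))^1 ∣ ((4:ℤ)^m - 1) := by
    rw [pow_one]
    have h2 : ((2:ZMod p)) ≠ 0 := by
      intro h
      have := (ZMod.natCast_eq_zero_iff 2 p).1 (by exact_mod_cast h)
      exact hp2 ((Nat.prime_dvd_prime_iff_eq hp.out Nat.prime_two).1 this)
    have hfl : (2:ZMod p)^(p-1) = 1 := ZMod.pow_card_sub_one_eq_one h2
    have hdiv : (p - 1) ∣ 2*m := by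
      have : (p-1) ∣ p^a - 1 := by
        have := Nat.sub_dvd_pow_sub_pow p 1 a
        simpa using this
      have h2m : 2*m = p^a - 1 := by omega
      rw [h2m]; exact this
    obtain ⟨e, he⟩ := hdiv
    have : ((4:ZMod p))^m = 1 := by
      have h4 : (4:ZMod p) = 2^2 := by norm_num
      rw [h4, ← pow_mul, show 2*m = (p-1)*e from he, pow_mul, hfl, one_pow]
    have h0 : (((4:ℤ)^m - 1 : ℤ) : ZMod p) = 0 := by push_cast; rw [this]; ring
    exact (ZMod.intCast_zmod_eq_zero_iff_dvd ((4:ℤ)^m - 1) p).1 h0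
  have hnorm := (padicNorm.dvd_iff_norm_le (p := p) (n := 1) (z := (4:ℤ)^m - 1)).1 (by exact_mod_cast hdvd)
  have hcast : (((4:ℤ)^m - 1 : ℤ) : ℚ) = (4:ℚ)^m - 1 := by push_cast; ring
  rw [hcast] at hnorm
  calc padicNorm p (1 - (4:ℚ)^m) = padicNorm p ((4:ℚ)^m - 1) := by
        rw [show (1 - (4:ℚ)^m) = -((4:ℚ)^m - 1) from by ring, padicNorm.neg]
    _ ≤ (p:ℚ)^(-(1:ℕ):ℤ) := hnorm
    _ = (p:ℚ)^(-1:ℤ) := by norm_num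

/-- the combined mod-p lemma -/
lemma keyW (hp2 : p ≠ 2) {a m k : ℕ} (ha : 0 < a) (hm : 2*m+1 = p^a) (hk : k ≤ m) :
    padicNorm p ((Nat.choose (2*k) k : ℚ)/(16:ℚ)^k
      - (-1:ℚ)^m * (Nat.choose (2*(m-k)) (m-k) : ℚ)) ≤ (p:ℚ)^(-1:ℤ) := by
  set X : ℚ := (Nat.choose (2*k) k : ℚ)
  set Y : ℚ := (Nat.choose (2*(m-k)) (m-k) : ℚ)
  set L : ℚ := (Nat.choose m k : ℚ) with hL
  have hLL : (Nat.choose m (m-k) : ℚ) = L := by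
    rw [hL, Nat.choose_symm hk]
  have h4k : ((4:ℚ)^k) ≠ 0 := by positivity
  have hpow4 : (4:ℚ)^(m-k) * (4:ℚ)^k = (4:ℚ)^m := by
    rw [← pow_add, Nat.sub_add_cancel hk]
  have hpows : (-1:ℚ)^(m-k) * (-1:ℚ)^k = (-1:ℚ)^m := by
    rw [← pow_add, Nat.sub_add_cancel hk]
  have hss : (-1:ℚ)^k * (-1:ℚ)^k = 1 := by
    rw [← pow_add, ← two_mul, pow_mul]; norm_num
  have htt : (-1:ℚ)^(m-k) * (-1:ℚ)^(m-k) = 1 := by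
    rw [← pow_add, ← two_mul, pow_mul]; norm_num
  have h16 : (16:ℚ)^k = (4:ℚ)^k * (4:ℚ)^k := by
    rw [show (16:ℚ) = 4*4 from by norm_num, mul_pow]
  have hu : (4:ℚ)^k * ((4:ℚ)^k)⁻¹ = 1 := mul_inv_cancel₀ h4k
  have hid : X/(16:ℚ)^k - (-1:ℚ)^m * Y
      = (X - (-4:ℚ)^k * L) * ((16:ℚ)^k)⁻¹
        - (-1:ℚ)^m * (Y - (-4:ℚ)^(m-k) * L)
        + L * (-1:ℚ)^k * ((4:ℚ)^k)⁻¹ * (1 - (4:ℚ)^m) := by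
    rw [div_eq_mul_inv, neg_pow (4:ℚ) k, neg_pow (4:ℚ) (m-k), h16, mul_inv, ← hpow4, ← hpows]
    set A : ℚ := (4:ℚ)^k
    set B : ℚ := (4:ℚ)^(m-k)
    set S : ℚ := (-1:ℚ)^k
    set T : ℚ := (-1:ℚ)^(m-k)
    set u : ℚ := ((4:ℚ)^k)⁻¹
    linear_combination (-(S*B*L))*htt + (S*L*u + S*B*L)*hu
  rw [hid]
  have hT1 : padicNorm p ((X - (-4:ℚ)^k * L) * ((16:ℚ)^k)⁻¹) ≤ (p:ℚ)^(-1:ℤ) := by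
    rw [padicNorm.mul]
    have : padicNorm p (((16:ℚ)^k)⁻¹) = 1 := by
      rw [show ((16:ℚ)^k)⁻¹ = 1/((16:ℚ)^k) from by ring, padicNorm.div, norm_sixteen_pow hp2,
        padicNorm.one]
      norm_num
    rw [this, mul_one]
    exact keyA hp2 hm hk
  have hT2 : padicNorm p ((-1:ℚ)^m * (Y - (-4:ℚ)^(m-k) * L)) ≤ (p:ℚ)^(-1:ℤ) := by
    rw [padicNorm.mul, norm_neg_one_pow, one_mul, ← hLL]
    exact keyA hp2 hm (Nat.sub_le m k)
  have hT3 : padicNorm p (L * (-1:ℚ)^k * ((4:ℚ)^k)⁻¹ * (1 - (4:ℚ)^m)) ≤ (p:ℚ)^(-1:ℤ) := by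
    rw [padicNorm.mul, padicNorm.mul, padicNorm.mul, norm_neg_one_pow]
    have h4 : padicNorm p (((4:ℚ)^k)⁻¹) = 1 := by
      rw [show ((4:ℚ)^k)⁻¹ = 1/((4:ℚ)^k) from by ring, padicNorm.div, norm_four_pow hp2,
        padicNorm.one]
      norm_num
    rw [h4, mul_one, mul_one]
    calc padicNorm p L * padicNorm p (1 - (4:ℚ)^m) ≤ 1 * (p:ℚ)^(-1:ℤ) := by
          apply mul_le_mul (norm_nat_le_one (m.choose k)) (fermat hp2 ha hm)
            (padicNorm.nonneg _) (by norm_num)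
      _ = (p:ℚ)^(-1:ℤ) := one_mul _
  calc padicNorm p ((X - (-4:ℚ)^k * L) * ((16:ℚ)^k)⁻¹ - (-1:ℚ)^m * (Y - (-4:ℚ)^(m-k) * L)
        + L * (-1:ℚ)^k * ((4:ℚ)^k)⁻¹ * (1 - (4:ℚ)^m))
      ≤ max (padicNorm p ((X - (-4:ℚ)^k * L) * ((16:ℚ)^k)⁻¹ - (-1:ℚ)^m * (Y - (-4:ℚ)^(m-k) * L)))
          (padicNorm p (L * (-1:ℚ)^k * ((4:ℚ)^k)⁻¹ * (1 - (4:ℚ)^m))) := padicNorm.nonarchimedean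
    _ ≤ (p:ℚ)^(-1:ℤ) := by
        apply max_le _ hT3
        calc padicNorm p _ ≤ max (padicNorm p ((X - (-4:ℚ)^k * L) * ((16:ℚ)^k)⁻¹))
              (padicNorm p ((-1:ℚ)^m * (Y - (-4:ℚ)^(m-k) * L))) := padicNorm.sub
          _ ≤ _ := max_le hT1 hT2
end BDC

open Finset
namespace BDC
variable {p : ℕ} [hp : Fact p.Prime]

section main
variable {a m k : ℕ}

/-- norm of `N^2` -/
lemma normN2 (ha : 0 < a) : padicNorm p (((p:ℚ)^a)^2) = (p:ℚ)^(-2*(a:ℤ)) := by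
  rw [← pow_mul, norm_p_pow]
  congr 1
  push_cast
  ring

lemma normC_low (hm : 2*m+1 = p^a) {i : ℕ} (hi : i < m) :
    (p:ℚ)^(2-2*(a:ℤ)) ≤ padicNorm p ((2*(i:ℚ)+1)^2) := by
  rw [pow_two, padicNorm.mul]
  calc (p:ℚ)^(2-2*(a:ℤ)) = (p:ℚ)^(1-(a:ℤ)) * (p:ℚ)^(1-(a:ℤ)) := by
        rw [← zpow_add₀ (ne_of_gt hp0Q)]; congr 1; ring
    _ ≤ _ := by
        apply mul_le_mul (norm_q hm hi) (norm_q hm hi) (le_of_lt (zpow_pos hp0Q _))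
          (padicNorm.nonneg _)

lemma normC_pos (i : ℕ) : 0 < padicNorm p ((2*(i:ℚ)+1)^2) := by
  apply norm_pos
  apply pow_ne_zero
  have h : (2*(i:ℚ)+1) = ((2*i+1 : ℕ):ℚ) := by push_cast; ring
  rw [h]
  exact_mod_cast Nat.succ_ne_zero (2*i)

lemma c_ne_zero (i : ℕ) : ((2*(i:ℚ)+1)^2) ≠ 0 := by
  apply pow_ne_zero
  have h : (2*(i:ℚ)+1) = ((2*i+1 : ℕ):ℚ) := by push_cast; ring
  rw [h]
  exact_mod_cast Nat.succ_ne_zero (2*i)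

lemma normC_sub (ha : 0 < a) (hm : 2*m+1 = p^a) {i : ℕ} (hi : i < m) :
    padicNorm p (((p:ℚ)^a)^2 - (2*(i:ℚ)+1)^2) = padicNorm p ((2*(i:ℚ)+1)^2) := by
  rw [show ((p:ℚ)^a)^2 - (2*(i:ℚ)+1)^2 = -((2*(i:ℚ)+1)^2 - ((p:ℚ)^a)^2) from by ring,
    padicNorm.neg]
  apply norm_sub_eq
  calc padicNorm p (((p:ℚ)^a)^2) = (p:ℚ)^(-2*(a:ℤ)) := normN2 ha
    _ < (p:ℚ)^(2-2*(a:ℤ)) := by apply zpow_lt_zpow_right₀ hp1Q; omega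
    _ ≤ _ := normC_low hm hi

lemma sigmaEstimate (ha : 0 < a) (hm : 2*m+1 = p^a) (hk : k ≤ m) :
    padicNorm p (∑ j ∈ range k, ((p:ℚ)^a)^2/((2*(j:ℚ)+1)^2)) ≤ (p:ℚ)^(-2:ℤ) := by
  apply padicNorm.sum_le'
  · intro j hj
    have hjm : j < m := lt_of_lt_of_le (mem_range.1 hj) hk
    rw [padicNorm.div, normN2 ha]
    calc (p:ℚ)^(-2*(a:ℤ)) / padicNorm p ((2*(j:ℚ)+1)^2)
        ≤ (p:ℚ)^(-2*(a:ℤ)) / (p:ℚ)^(2-2*(a:ℤ)) := by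
          apply div_le_div_of_nonneg_left (le_of_lt (zpow_pos hp0Q _)) (zpow_pos hp0Q _)
            (normC_low hm hjm)
      _ = (p:ℚ)^(-2:ℤ) := by
          rw [← zpow_sub₀ (ne_of_gt hp0Q)]
          congr 1
          ring
  · positivity

/-- Norm bound for a single error term. -/
lemma errTerm (hp2 : p ≠ 2) (ha : 0 < a) (hm : 2*m+1 = p^a) (hk : k ≤ m)
    {l j : ℕ} (hlj : l < j) (hjk : j < k) :
    padicNorm p (((((p:ℚ)^a)^2 * ∏ i ∈ range l, (((p:ℚ)^a)^2 - (2*(i:ℚ)+1)^2))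
        * ∏ i ∈ Ico (l+1) j, (-((2*(i:ℚ)+1)^2)))
        * ((p:ℚ)^a)^2 * (∏ i ∈ Ico (j+1) k, (-((2*(i:ℚ)+1)^2)))
        / ((4:ℚ)^k * ((2*k).factorial : ℚ))) ≤ (p:ℚ)^(-4:ℤ) := by
  have hwQ : padicNorm p (((2*k).factorial : ℚ)) ≠ 0 :=
    ne_of_gt (norm_pos (by exact_mod_cast (2*k).factorial_ne_zero))
  have hwpos : 0 < padicNorm p (((2*k).factorial : ℚ)) :=
    norm_pos (by exact_mod_cast (2*k).factorial_ne_zero)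
  -- abbreviations
  set Φ : ℕ → ℚ := fun i => padicNorm p ((2*(i:ℚ)+1)^2) with hΦ
  have hΦpos : ∀ i, 0 < Φ i := fun i => normC_pos i
  -- rewrite the norm of the big product
  have hF : padicNorm p ((4:ℚ)^k * ((2*k).factorial : ℚ)) = padicNorm p (((2*k).factorial : ℚ)) := by
    rw [padicNorm.mul, norm_four_pow hp2, one_mul]
  have hProdl : padicNorm p (∏ i ∈ range l, (((p:ℚ)^a)^2 - (2*(i:ℚ)+1)^2)) = ∏ i ∈ range l, Φ i := by
    rw [norm_prod]
    apply Finset.prod_congr rfl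
    intro i hi
    exact normC_sub ha hm (by have := mem_range.1 hi; omega)
  have hProdlj : padicNorm p (∏ i ∈ Ico (l+1) j, (-((2*(i:ℚ)+1)^2))) = ∏ i ∈ Ico (l+1) j, Φ i := by
    rw [norm_prod]
    apply Finset.prod_congr rfl
    intro i _
    rw [padicNorm.neg]
  have hProdjk : padicNorm p (∏ i ∈ Ico (j+1) k, (-((2*(i:ℚ)+1)^2))) = ∏ i ∈ Ico (j+1) k, Φ i := by
    rw [norm_prod]
    apply Finset.prod_congr rfl
    intro i _
    rw [padicNorm.neg]
  -- split of the full product of Φ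
  have hsplit2 : ((∏ i ∈ range l, Φ i) * Φ l * ∏ i ∈ Ico (l+1) j, Φ i) * Φ j * ∏ i ∈ Ico (j+1) k, Φ i
      = ∏ i ∈ range k, Φ i := by
    rw [prod_split Φ hjk, prod_split Φ hlj]
  -- value of the full product of Φ
  have hQ : ∏ i ∈ range k, Φ i = padicNorm p ((Nat.choose (2*k) k : ℚ)) * padicNorm p (((2*k).factorial : ℚ)) := by
    have hcp : (∏ i ∈ range k, (2*(i:ℚ)+1)^2) = (∏ i ∈ range k, (2*(i:ℚ)+1))^2 := by
      rw [Finset.prod_pow]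
    have h1 : ∏ i ∈ range k, Φ i = (padicNorm p (∏ i ∈ range k, (2*(i:ℚ)+1)))^2 := by
      calc ∏ i ∈ range k, Φ i = padicNorm p (∏ i ∈ range k, (2*(i:ℚ)+1)^2) :=
            (norm_prod (fun i => (2*(i:ℚ)+1)^2) (range k)).symm
        _ = padicNorm p ((∏ i ∈ range k, (2*(i:ℚ)+1))^2) := by rw [hcp]
        _ = (padicNorm p (∏ i ∈ range k, (2*(i:ℚ)+1)))^2 := by
            rw [pow_two, pow_two, padicNorm.mul]
    have hq2 : padicNorm p ((k.factorial : ℚ)) * padicNorm p (∏ i ∈ range k, (2*(i:ℚ)+1))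
        = padicNorm p (((2*k).factorial : ℚ)) := by
      have := congrArg (padicNorm p) (prod_odd k)
      rw [padicNorm.mul, padicNorm.mul, norm_two_pow hp2, one_mul] at this
      exact this
    have hx2 : padicNorm p ((Nat.choose (2*k) k : ℚ)) * padicNorm p ((k.factorial : ℚ)) * padicNorm p ((k.factorial : ℚ))
        = padicNorm p (((2*k).factorial : ℚ)) := by
      have := congrArg (padicNorm p) (cast_central k)
      rw [padicNorm.mul, padicNorm.mul] at this
      exact this
    have hfk0 : padicNorm p ((k.factorial : ℚ)) ≠ 0 :=
      ne_of_gt (norm_pos (by exact_mod_cast k.factorial_ne_zero))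
    rw [h1]
    apply mul_right_cancel₀ hfk0
    apply mul_right_cancel₀ hfk0
    linear_combination (padicNorm p ((k.factorial : ℚ)) * padicNorm p (∏ i ∈ range k, (2*(i:ℚ)+1))
      + padicNorm p (((2*k).factorial : ℚ))) * hq2 + (- padicNorm p (((2*k).factorial : ℚ))) * hx2
  -- the expression for the norm of the term
  have hterm : padicNorm p (((((p:ℚ)^a)^2 * ∏ i ∈ range l, (((p:ℚ)^a)^2 - (2*(i:ℚ)+1)^2))
        * ∏ i ∈ Ico (l+1) j, (-((2*(i:ℚ)+1)^2)))
        * ((p:ℚ)^a)^2 * (∏ i ∈ Ico (j+1) k, (-((2*(i:ℚ)+1)^2)))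
        / ((4:ℚ)^k * ((2*k).factorial : ℚ)))
      = ((p:ℚ)^(-2*(a:ℤ)) * (∏ i ∈ range l, Φ i) * (∏ i ∈ Ico (l+1) j, Φ i)
          * (p:ℚ)^(-2*(a:ℤ)) * (∏ i ∈ Ico (j+1) k, Φ i)) / padicNorm p (((2*k).factorial : ℚ)) := by
    rw [padicNorm.div, padicNorm.mul, padicNorm.mul, padicNorm.mul, padicNorm.mul,
      normN2 ha, hProdl, hProdlj, hProdjk, hF]
  rw [hterm]
  -- bound
  have hPP : (∏ i ∈ range l, Φ i) * (∏ i ∈ Ico (l+1) j, Φ i) * (∏ i ∈ Ico (j+1) k, Φ i)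
      = (padicNorm p ((Nat.choose (2*k) k : ℚ)) * padicNorm p (((2*k).factorial : ℚ))) / (Φ l * Φ j) := by
    rw [eq_div_iff (ne_of_gt (mul_pos (hΦpos l) (hΦpos j)))]
    linear_combination hsplit2 + hQ
  have hXle : padicNorm p ((Nat.choose (2*k) k : ℚ)) ≤ 1 := norm_nat_le_one _
  have hXpos : 0 ≤ padicNorm p ((Nat.choose (2*k) k : ℚ)) := padicNorm.nonneg _
  have hcl : (p:ℚ)^(2-2*(a:ℤ)) ≤ Φ l := normC_low hm (by omega)
  have hcj : (p:ℚ)^(2-2*(a:ℤ)) ≤ Φ j := normC_low hm (by omega)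
  have hkey : (p:ℚ)^(-2*(a:ℤ)) * (p:ℚ)^(-2*(a:ℤ)) * padicNorm p ((Nat.choose (2*k) k : ℚ))
      ≤ (p:ℚ)^(-4:ℤ) * (Φ l * Φ j) := by
    calc (p:ℚ)^(-2*(a:ℤ)) * (p:ℚ)^(-2*(a:ℤ)) * padicNorm p ((Nat.choose (2*k) k : ℚ))
        ≤ (p:ℚ)^(-2*(a:ℤ)) * (p:ℚ)^(-2*(a:ℤ)) * 1 := by
          apply mul_le_mul_of_nonneg_left hXle
          positivity
      _ = (p:ℚ)^(-4:ℤ) * ((p:ℚ)^(2-2*(a:ℤ)) * (p:ℚ)^(2-2*(a:ℤ))) := by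
          rw [← zpow_add₀ (ne_of_gt hp0Q), ← zpow_add₀ (ne_of_gt hp0Q), ← zpow_add₀ (ne_of_gt hp0Q),
            mul_one]
          congr 1
          ring
      _ ≤ (p:ℚ)^(-4:ℤ) * (Φ l * Φ j) := by
          apply mul_le_mul_of_nonneg_left _ (le_of_lt (zpow_pos hp0Q _))
          apply mul_le_mul hcl hcj (le_of_lt (zpow_pos hp0Q _)) (le_of_lt (hΦpos l))
  -- final computation
  have hNum : ((p:ℚ)^(-2*(a:ℤ)) * (∏ i ∈ range l, Φ i) * (∏ i ∈ Ico (l+1) j, Φ i)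
          * (p:ℚ)^(-2*(a:ℤ)) * (∏ i ∈ Ico (j+1) k, Φ i)) * (Φ l * Φ j)
      = ((p:ℚ)^(-2*(a:ℤ)) * (p:ℚ)^(-2*(a:ℤ)) * padicNorm p ((Nat.choose (2*k) k : ℚ)))
        * padicNorm p (((2*k).factorial : ℚ)) := by
    linear_combination ((p:ℚ)^(-2*(a:ℤ)) * (p:ℚ)^(-2*(a:ℤ))) * hsplit2
      + ((p:ℚ)^(-2*(a:ℤ)) * (p:ℚ)^(-2*(a:ℤ))) * hQ
  rw [div_le_iff₀ hwpos]
  apply le_of_mul_le_mul_right _ (mul_pos (hΦpos l) (hΦpos j))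
  calc ((p:ℚ)^(-2*(a:ℤ)) * (∏ i ∈ range l, Φ i) * (∏ i ∈ Ico (l+1) j, Φ i)
          * (p:ℚ)^(-2*(a:ℤ)) * (∏ i ∈ Ico (j+1) k, Φ i)) * (Φ l * Φ j)
      = ((p:ℚ)^(-2*(a:ℤ)) * (p:ℚ)^(-2*(a:ℤ)) * padicNorm p ((Nat.choose (2*k) k : ℚ)))
        * padicNorm p (((2*k).factorial : ℚ)) := hNum
    _ ≤ ((p:ℚ)^(-4:ℤ) * (Φ l * Φ j)) * padicNorm p (((2*k).factorial : ℚ)) :=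
        mul_le_mul_of_nonneg_right hkey (le_of_lt hwpos)
    _ = (p:ℚ)^(-4:ℤ) * padicNorm p (((2*k).factorial : ℚ)) * (Φ l * Φ j) := by ring

end main
end BDC

open Finset
namespace BDC
variable {p : ℕ} [hp : Fact p.Prime]

lemma errEstimate (hp2 : p ≠ 2) {a m k : ℕ} (ha : 0 < a) (hm : 2*m+1 = p^a) (hk : k ≤ m) :
    padicNorm p
      (((Nat.choose (m+k) (2*k) : ℚ) - (Nat.choose (2*k) k : ℚ)/(-16:ℚ)^k)
        + ((Nat.choose (2*k) k : ℚ)/(-16:ℚ)^k)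
            * (∑ j ∈ range k, ((p:ℚ)^a)^2/((2*(j:ℚ)+1)^2)))
      ≤ (p:ℚ)^(-3:ℤ) := by
  set N2 : ℚ := ((p:ℚ)^a)^2 with hN2def
  set c : ℕ → ℚ := fun i => (2*(i:ℚ)+1)^2 with hcdef
  set F : ℚ := (4:ℚ)^k * ((2*k).factorial : ℚ) with hFdef
  set B : ℚ := (Nat.choose (2*k) k : ℚ)/(-16:ℚ)^k with hBdef
  set Sg : ℚ := ∑ j ∈ range k, N2/(c j) with hSdef
  have hF0 : F ≠ 0 := by
    apply mul_ne_zero (pow_ne_zero _ (by norm_num))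
    exact_mod_cast (2*k).factorial_ne_zero
  have hfk0 : ((k.factorial : ℚ)) ≠ 0 := by exact_mod_cast k.factorial_ne_zero
  have hc0 : ∀ i : ℕ, c i ≠ 0 := fun i => c_ne_zero i
  -- product identities
  have hA : (Nat.choose (m+k) (2*k) : ℚ) * F = ∏ i ∈ range k, (N2 - c i) := by
    have h := prodA m k hk
    have hNm : (2*(m:ℚ)+1) = (p:ℚ)^a := by
      have : ((2*m+1 : ℕ) : ℚ) = ((p^a : ℕ) : ℚ) := by exact_mod_cast congrArg (Nat.cast : ℕ → ℚ) hm
      push_cast at this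
      exact_mod_cast this
    rw [hNm] at h
    rw [hFdef, hN2def, hcdef]
    linear_combination h
  have hB2 : B * F = ∏ i ∈ range k, (-(c i)) := by
    have h16 : ((-16:ℚ))^k ≠ 0 := pow_ne_zero _ (by norm_num)
    rw [hBdef, div_mul_eq_mul_div, div_eq_iff h16]
    have hprod : ∏ i ∈ range k, (-(c i)) = (-1:ℚ)^k * (∏ i ∈ range k, (2*(i:ℚ)+1))^2 := by
      calc ∏ i ∈ range k, (-(c i)) = ∏ i ∈ range k, ((-1) * (2*(i:ℚ)+1)^2) := by
            apply Finset.prod_congr rfl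
            intro i _
            rw [hcdef]; ring
        _ = (-1:ℚ)^k * ∏ i ∈ range k, (2*(i:ℚ)+1)^2 := by
            rw [Finset.prod_mul_distrib, Finset.prod_const, Finset.card_range]
        _ = (-1:ℚ)^k * (∏ i ∈ range k, (2*(i:ℚ)+1))^2 := by rw [Finset.prod_pow]
    rw [hprod]
    have hss : (-1:ℚ)^k * (-1:ℚ)^k = 1 := by
      rw [← pow_add, ← two_mul, pow_mul]; norm_num
    have h44 : (4:ℚ)^k = 2^k*2^k := by rw [← mul_pow]; norm_num
    have h16b : (16:ℚ)^k = 2^k*2^k*2^k*2^k := by rw [← mul_pow, ← mul_pow, ← mul_pow]; norm_num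
    have hneg16 : (-16:ℚ)^k = (-1:ℚ)^k * (16:ℚ)^k := by
      rw [← neg_one_mul, mul_pow]
    rw [hFdef, hneg16, h16b, h44]
    apply mul_right_cancel₀ hfk0
    linear_combination
      (-(((Nat.choose (2*k) k : ℚ))*(2:ℚ)^k*(2:ℚ)^k*(k.factorial:ℚ)
          + (2:ℚ)^k*(2:ℚ)^k*(2:ℚ)^k*(∏ i ∈ range k, (2*(i:ℚ)+1)))) * prod_odd k
      + ((2:ℚ)^k*(2:ℚ)^k*(2:ℚ)^k*(∏ i ∈ range k, (2*(i:ℚ)+1))) * cast_central k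
      + (-((2:ℚ)^k*(2:ℚ)^k*(2:ℚ)^k*(2:ℚ)^k*(∏ i ∈ range k, (2*(i:ℚ)+1))^2*(k.factorial:ℚ))) * hss
  -- telescope
  have hTEL : (∏ i ∈ range k, (N2 - c i)) - ∏ i ∈ range k, (-(c i))
      = ∑ j ∈ range k, (N2 * ∏ i ∈ range j, (N2 - c i)) * ∏ i ∈ Ico (j+1) k, (-(c i)) := by
    have h := telescope (fun i => N2 - c i) (fun i => -(c i)) k
    rw [h]
    apply Finset.sum_congr rfl
    intro j _
    rw [sub_neg_eq_add, sub_add_cancel]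
  have hIN : ∀ j : ℕ, ∏ i ∈ range j, (N2 - c i)
      = (∏ i ∈ range j, (-(c i)))
        + ∑ l ∈ range j, (N2 * ∏ i ∈ range l, (N2 - c i)) * ∏ i ∈ Ico (l+1) j, (-(c i)) := by
    intro j
    have h := telescope (fun i => N2 - c i) (fun i => -(c i)) j
    have h2 : (∏ i ∈ range j, (N2 - c i)) - ∏ i ∈ range j, (-(c i))
        = ∑ l ∈ range j, (N2 * ∏ i ∈ range l, (N2 - c i)) * ∏ i ∈ Ico (l+1) j, (-(c i)) := by
      rw [h]
      apply Finset.sum_congr rfl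
      intro l _
      rw [sub_neg_eq_add, sub_add_cancel]
    linarith [h2]
  have hmain : ∀ j ∈ range k, N2 * (∏ i ∈ range j, (-(c i))) * (∏ i ∈ Ico (j+1) k, (-(c i)))
      = -(N2/(c j)) * ∏ i ∈ range k, (-(c i)) := by
    intro j hj
    have hsp := prod_split (fun i => -(c i)) (mem_range.1 hj)
    rw [neg_mul, div_mul_eq_mul_div, ← neg_div, eq_comm, div_eq_iff (hc0 j), hsp]
    ring
  -- master identity
  have hABF : ((Nat.choose (m+k) (2*k) : ℚ) - B) * F
      = ∑ j ∈ range k, (N2 * ∏ i ∈ range j, (N2 - c i)) * ∏ i ∈ Ico (j+1) k, (-(c i)) := by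
    rw [sub_mul, hA, hB2, hTEL]
  have hsum : ∑ j ∈ range k, (N2 * ∏ i ∈ range j, (N2 - c i)) * ∏ i ∈ Ico (j+1) k, (-(c i))
      = ∑ j ∈ range k, ( -(N2/(c j)) * ∏ i ∈ range k, (-(c i))
          + (∑ l ∈ range j, (N2 * ∏ i ∈ range l, (N2 - c i)) * ∏ i ∈ Ico (l+1) j, (-(c i)))
              * N2 * ∏ i ∈ Ico (j+1) k, (-(c i)) ) := by
    apply Finset.sum_congr rfl
    intro j hj
    rw [hIN j, ← hmain j hj]
    ring
  have hgoal : ((Nat.choose (m+k) (2*k) : ℚ) - B) + B * Sg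
      = (∑ j ∈ range k, (∑ l ∈ range j, (N2 * ∏ i ∈ range l, (N2 - c i)) * ∏ i ∈ Ico (l+1) j, (-(c i)))
          * N2 * ∏ i ∈ Ico (j+1) k, (-(c i))) / F := by
    have hAB : (Nat.choose (m+k) (2*k) : ℚ) - B
        = (∑ j ∈ range k, (N2 * ∏ i ∈ range j, (N2 - c i)) * ∏ i ∈ Ico (j+1) k, (-(c i))) / F :=
      (eq_div_iff hF0).2 hABF
    rw [hAB, hsum, Finset.sum_add_distrib]
    have hS1 : ∑ j ∈ range k, -(N2/(c j)) * ∏ i ∈ range k, (-(c i)) = -(Sg * (B * F)) := by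
      rw [hB2, hSdef, ← Finset.sum_mul, Finset.sum_neg_distrib, neg_mul]
    rw [hS1]
    field_simp
    ring
  rw [hgoal]
  -- rewrite as a double sum of quotients
  have hre : (∑ j ∈ range k, (∑ l ∈ range j, (N2 * ∏ i ∈ range l, (N2 - c i)) * ∏ i ∈ Ico (l+1) j, (-(c i)))
          * N2 * ∏ i ∈ Ico (j+1) k, (-(c i))) / F
      = ∑ j ∈ range k, ∑ l ∈ range j,
          ((N2 * ∏ i ∈ range l, (N2 - c i)) * (∏ i ∈ Ico (l+1) j, (-(c i)))
            * N2 * (∏ i ∈ Ico (j+1) k, (-(c i)))) / F := by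
    rw [Finset.sum_div]
    apply Finset.sum_congr rfl
    intro j _
    rw [Finset.sum_mul, Finset.sum_mul, Finset.sum_div]
  rw [hre]
  apply padicNorm.sum_le'
  · intro j hj
    apply padicNorm.sum_le'
    · intro l hl
      have hterm := errTerm (p := p) hp2 ha hm hk (mem_range.1 hl) (mem_range.1 hj)
      calc padicNorm p ((N2 * ∏ i ∈ range l, (N2 - c i)) * (∏ i ∈ Ico (l+1) j, (-(c i)))
            * N2 * (∏ i ∈ Ico (j+1) k, (-(c i))) / F) ≤ (p:ℚ)^(-4:ℤ) := hterm
        _ ≤ (p:ℚ)^(-3:ℤ) := by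
            apply zpow_le_zpow_right₀ (le_of_lt hp1Q)
            norm_num
    · positivity
  · positivity
end BDC

open Finset BDC

theorem binom_diff_cong (p : ℕ) (hp : p.Prime) (hp2 : p ≠ 2)
    (a : ℕ) (ha : 0 < a) (k : ℕ) (hk : k ≤ (p ^ a - 1) / 2) :
    ratModCast p 3
      ((Nat.choose ((p ^ a - 1) / 2 + k) (2 * k) : ℚ) -
        (Nat.choose (2 * k) k : ℚ) / (-16 : ℚ) ^ k)
      ((-1 : ℚ) ^ ((k : ℤ) - 1) * (jacobiSym (-1) (p ^ a) : ℚ) *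
        (Nat.choose (p ^ a - 1 - 2 * k) ((p ^ a - 1) / 2 - k) : ℚ) *
        ∑ j ∈ Finset.Icc 1 k, (p : ℚ) ^ (2 * a) / (2 * (j : ℚ) - 1) ^ 2) := by
  haveI : Fact p.Prime := ⟨hp⟩
  have hpodd : Odd p := hp.odd_of_ne_two hp2
  have hnodd : Odd (p^a) := hpodd.pow
  obtain ⟨r, hr⟩ := hnodd
  have hm : 2*((p^a - 1)/2)+1 = p^a := by omega
  set m : ℕ := (p^a - 1)/2 with hmdef
  rw [BDC.ratModCast_iff]
  have hexp3 : (-(3:ℕ):ℤ) = (-3:ℤ) := by norm_num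
  rw [hexp3]
  -- the Jacobi symbol
  have hJ : (jacobiSym (-1) (p^a) : ℚ) = (-1:ℚ)^m := by
    have h1 : jacobiSym (-1) (p^a) = ZMod.χ₄ ((p^a : ℕ)) := jacobiSym.at_neg_one ⟨r, hr⟩
    have h2 : ZMod.χ₄ ((p^a : ℕ)) = (-1:ℤ)^((p^a)/2) :=
      ZMod.χ₄_eq_neg_one_pow (n := p^a) (by omega)
    have h3 : (p^a)/2 = m := by omega
    rw [h1, h2, h3]
    push_cast
    ring
  rcases Nat.eq_zero_or_pos k with hk0 | hk1
  · subst hk0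
    have hIcc : Finset.Icc 1 0 = (∅ : Finset ℕ) := by decide
    simp only [hIcc, Finset.sum_empty, mul_zero, Nat.mul_zero, Nat.add_zero,
      Nat.choose_zero_right, pow_zero, Nat.cast_one, div_one, sub_self, Finset.sum_empty]
    rw [padicNorm.zero]
    positivity
  -- main case
  have hC' : p^a - 1 - 2*k = 2*(m-k) := by omega
  have hSS : ∑ j ∈ Finset.Icc 1 k, (p:ℚ)^(2*a)/(2*(j:ℚ)-1)^2
      = ∑ j ∈ range k, ((p:ℚ)^a)^2/((2*(j:ℚ)+1)^2) := by
    rw [show Finset.Icc 1 k = Finset.Ico 1 (k+1) from by rw [Finset.Ico_add_one_right_eq_Icc],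
      Finset.sum_Ico_eq_sum_range]
    simp only [Nat.add_sub_cancel]
    apply Finset.sum_congr rfl
    intro i _
    have h1 : (p:ℚ)^(2*a) = ((p:ℚ)^a)^2 := by rw [mul_comm 2 a, pow_mul]
    have h2 : (2*((1+i : ℕ):ℚ) - 1) = 2*(i:ℚ)+1 := by push_cast; ring
    rw [h1, h2]
  have hzp : (-1:ℚ)^((k:ℤ)-1) = (-1:ℚ)^(k-1) := by
    rw [show (k:ℤ)-1 = ((k-1 : ℕ):ℤ) from by omega, zpow_natCast]
  rw [hJ, hSS, hC', hzp]
  -- notation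
  set S : ℚ := ∑ j ∈ range k, ((p:ℚ)^a)^2/((2*(j:ℚ)+1)^2) with hSdef
  set X : ℚ := (Nat.choose (2*k) k : ℚ) with hXdef
  set A : ℚ := (Nat.choose (m+k) (2*k) : ℚ) with hAdef
  set Y : ℚ := (Nat.choose (2*(m-k)) (m-k) : ℚ) with hYdef
  have h16 : ((16:ℚ))^k ≠ 0 := by norm_num
  have hss' : (-1:ℚ)^(k-1) * (-1:ℚ)^(k-1) = 1 := by
    rw [← pow_add, ← two_mul, pow_mul]; norm_num
  have hkk : (-1:ℚ)^k = -(-1:ℚ)^(k-1) := by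
    have h := pow_succ (-1:ℚ) (k-1)
    rw [show (k-1)+1 = k from by omega] at h
    rw [h]
    ring
  have hBeq : X/(-16:ℚ)^k = -((-1:ℚ)^(k-1)) * (X/(16:ℚ)^k) := by
    have hneg16 : (-16:ℚ)^k = (-1:ℚ)^k * (16:ℚ)^k := by
      rw [← neg_one_mul, mul_pow]
    rw [hneg16, hkk]
    field_simp
    linear_combination X * hss'
  have hDelta : (A - X/(-16:ℚ)^k) - ((-1:ℚ)^(k-1) * (-1:ℚ)^m * Y) * S
      = ((A - X/(-16:ℚ)^k) + (X/(-16:ℚ)^k) * S)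
        + (((-1:ℚ)^(k-1)) * (X/(16:ℚ)^k - (-1:ℚ)^m * Y)) * S := by
    rw [hBeq]
    ring
  rw [hDelta]
  calc padicNorm p (((A - X/(-16:ℚ)^k) + (X/(-16:ℚ)^k) * S)
        + (((-1:ℚ)^(k-1)) * (X/(16:ℚ)^k - (-1:ℚ)^m * Y)) * S)
      ≤ max (padicNorm p ((A - X/(-16:ℚ)^k) + (X/(-16:ℚ)^k) * S))
          (padicNorm p ((((-1:ℚ)^(k-1)) * (X/(16:ℚ)^k - (-1:ℚ)^m * Y)) * S)) :=
        padicNorm.nonarchimedean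
    _ ≤ (p:ℚ)^(-3:ℤ) := by
        apply max_le
        · exact errEstimate hp2 ha hm hk
        · rw [padicNorm.mul, padicNorm.mul, norm_neg_one_pow, one_mul]
          calc padicNorm p (X/(16:ℚ)^k - (-1:ℚ)^m * Y) * padicNorm p S
              ≤ (p:ℚ)^(-1:ℤ) * (p:ℚ)^(-2:ℤ) := by
                apply mul_le_mul (keyW hp2 ha hm hk) (sigmaEstimate ha hm hk)
                  (padicNorm.nonneg _) (le_of_lt (zpow_pos hp0Q _))
            _ = (p:ℚ)^(-3:ℤ) := by
                rw [← zpow_add₀ (ne_of_gt hp0Q)]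
                norm_num
end

section
/- Let p be an odd prime with p ≠ 5 and let a be a positive integer. Then (L_{p^a} − 1)/5 − (p^a/5)·F_{p^a} + 1 ≡ −F_{p^a−(p^a/5)}^2/2 (mod p^4), where the congruence is between rational numbers whose denominators are coprime to p (i.e., it holds in the localization ℤ_(p)). -/
/-- Quadratic extension `(ZMod p)[√5]`. -/
@[ext] structure Q5 (p : ℕ) where
  a : ZMod p
  b : ZMod p

namespace Q5
variable {p : ℕ}

instance : Zero (Q5 p) := ⟨⟨0, 0⟩⟩
instance : One (Q5 p) := ⟨⟨1, 0⟩⟩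
instance : Add (Q5 p) := ⟨fun x y => ⟨x.a + y.a, x.b + y.b⟩⟩
instance : Neg (Q5 p) := ⟨fun x => ⟨-x.a, -x.b⟩⟩
instance : Mul (Q5 p) := ⟨fun x y => ⟨x.a * y.a + 5 * x.b * y.b, x.a * y.b + x.b * y.a⟩⟩

@[simp] lemma zero_a : (0 : Q5 p).a = 0 := rfl
@[simp] lemma zero_b : (0 : Q5 p).b = 0 := rfl
@[simp] lemma one_a : (1 : Q5 p).a = 1 := rfl
@[simp] lemma one_b : (1 : Q5 p).b = 0 := rfl
@[simp] lemma add_a (x y : Q5 p) : (x + y).a = x.a + y.a := rfl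
@[simp] lemma add_b (x y : Q5 p) : (x + y).b = x.b + y.b := rfl
@[simp] lemma neg_a (x : Q5 p) : (-x).a = -x.a := rfl
@[simp] lemma neg_b (x : Q5 p) : (-x).b = -x.b := rfl
@[simp] lemma mul_a (x y : Q5 p) : (x * y).a = x.a * y.a + 5 * x.b * y.b := rfl
@[simp] lemma mul_b (x y : Q5 p) : (x * y).b = x.a * y.b + x.b * y.a := rfl

instance : CommRing (Q5 p) where
  sub x y := ⟨x.a - y.a, x.b - y.b⟩
  sub_eq_add_neg x y := by
    ext
    · show x.a - y.a = (x + -y).a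
      rw [add_a, neg_a]; ring
    · show x.b - y.b = (x + -y).b
      rw [add_b, neg_b]; ring
  add_assoc x y z := by ext <;> simp <;> ring
  zero_add x := by ext <;> simp
  add_zero x := by ext <;> simp
  add_comm x y := by ext <;> simp <;> ring
  neg_add_cancel x := by ext <;> simp
  mul_assoc x y z := by ext <;> simp <;> ring
  one_mul x := by ext <;> simp
  mul_one x := by ext <;> simp
  left_distrib x y z := by ext <;> simp <;> ring
  right_distrib x y z := by ext <;> simp <;> ring
  mul_comm x y := by ext <;> simp <;> ring
  zero_mul x := by ext <;> simp
  mul_zero x := by ext <;> simp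
  nsmul := nsmulRec
  zsmul := zsmulRec

@[simp] lemma sub_a (x y : Q5 p) : (x - y).a = x.a - y.a := rfl
@[simp] lemma sub_b (x y : Q5 p) : (x - y).b = x.b - y.b := rfl

@[simp] lemma natCast_a (n : ℕ) : ((n : Q5 p)).a = (n : ZMod p) := by
  induction n with
  | zero => simp
  | succ n ih => rw [Nat.cast_succ, Nat.cast_succ, add_a, ih, one_a]

@[simp] lemma natCast_b (n : ℕ) : ((n : Q5 p)).b = 0 := by
  induction n with
  | zero => simp
  | succ n ih => rw [Nat.cast_succ, add_b, ih, one_b, add_zero]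

@[simp] lemma intCast_a (n : ℤ) : ((n : Q5 p)).a = (n : ZMod p) := by
  cases n with
  | ofNat n => simp
  | negSucc n => rw [Int.cast_negSucc, Int.cast_negSucc, neg_a, natCast_a]

@[simp] lemma intCast_b (n : ℤ) : ((n : Q5 p)).b = 0 := by
  cases n with
  | ofNat n => simp
  | negSucc n => rw [Int.cast_negSucc, neg_b, natCast_b, neg_zero]

instance [Fact p.Prime] : CharP (Q5 p) p := by
  constructor
  intro n
  rw [← ZMod.natCast_eq_zero_iff]
  constructor
  · intro h
    have := congrArg Q5.a h
    simpa using this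
  · intro h
    ext <;> simp [h]

end Q5

section Alpha
open Q5
variable (p : ℕ) [Fact p.Prime]

/-- `α = (1+√5)/2` in `Q5 p`. -/
def alpha : Q5 p := ⟨(2 : ZMod p)⁻¹, (2 : ZMod p)⁻¹⟩

/-- `√5` in `Q5 p`. -/
def sqrt5 : Q5 p := ⟨0, 1⟩

variable {p}

lemma five_eq : (5 : Q5 p) = ⟨(5 : ZMod p), 0⟩ := by
  have h : (5 : Q5 p) = ((5 : ℕ) : Q5 p) := by norm_num
  rw [h]
  ext
  · rw [natCast_a]; norm_num
  · rw [natCast_b]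

lemma two_nz (hp2 : p ≠ 2) : (2 : ZMod p) ≠ 0 := by
  have : ((2 : ℕ) : ZMod p) ≠ 0 := by
    rw [Ne, ZMod.natCast_eq_zero_iff]
    intro h
    rcases (Nat.prime_dvd_prime_iff_eq (Fact.out) (by norm_num)).mp h with rfl
    exact hp2 rfl
  simpa using this

lemma alpha_sq (hp2 : p ≠ 2) : (alpha p) ^ 2 = alpha p + 1 := by
  have h2 := two_nz (p := p) hp2
  have hinv : (2 : ZMod p) * (2 : ZMod p)⁻¹ = 1 := mul_inv_cancel₀ h2
  rw [pow_two]
  ext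
  · rw [mul_a, add_a, one_a]
    show (alpha p).a * (alpha p).a + 5 * (alpha p).b * (alpha p).b = (alpha p).a + 1
    simp only [alpha]
    linear_combination ((3 : ZMod p) * (2:ZMod p)⁻¹ + 1) * hinv
  · rw [mul_b, add_b, one_b]
    simp only [alpha]
    linear_combination (2:ZMod p)⁻¹ * hinv

lemma alpha_mul_pred (hp2 : p ≠ 2) : alpha p * (alpha p - 1) = 1 := by
  have h := alpha_sq (p := p) hp2
  rw [pow_two] at h
  calc alpha p * (alpha p - 1) = alpha p * alpha p - alpha p := by ring
  _ = 1 := by rw [h]; ring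

lemma alpha_isUnit (hp2 : p ≠ 2) : IsUnit (alpha p) :=
  IsUnit.of_mul_eq_one _ (alpha_mul_pred hp2)

/-- `x² = x + 1 → x^(n+1) = F_{n+1} x + F_n`. -/
lemma pow_eq_fib {R : Type*} [CommRing R] (x : R) (hx : x ^ 2 = x + 1) (n : ℕ) :
    x ^ (n + 1) = (Nat.fib (n + 1) : R) * x + (Nat.fib n : R) := by
  induction n with
  | zero => simp
  | succ n ih =>
    have h : x ^ (n + 2) = x ^ (n + 1) * x := by ring
    rw [h, ih, Nat.fib_add_two]
    push_cast
    calc ((Nat.fib (n+1) : R) * x + Nat.fib n) * x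
        = (Nat.fib (n+1) : R) * x ^ 2 + (Nat.fib n : R) * x := by ring
      _ = _ := by rw [hx]; ring

lemma alpha_pow_p (hp2 : p ≠ 2) :
    (alpha p) ^ p = ⟨(2 : ZMod p)⁻¹, ((legendreSym p 5 : ℤ) : ZMod p) * (2 : ZMod p)⁻¹⟩ := by
  have hp : p.Prime := Fact.out
  have hodd : Odd p := hp.odd_of_ne_two hp2
  have h2 := two_nz (p := p) hp2
  -- α = (1 + √5) * c with c = ι 2⁻¹
  set c : Q5 p := ⟨(2 : ZMod p)⁻¹, 0⟩ with hc
  have halpha : alpha p = (1 + sqrt5 p) * c := by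
    ext <;> simp [alpha, sqrt5, hc]
  have hscalar : ∀ (u : ZMod p) (n : ℕ), (⟨u, 0⟩ : Q5 p) ^ n = ⟨u ^ n, 0⟩ := by
    intro u n
    induction n with
    | zero => ext <;> simp
    | succ n ih => rw [pow_succ, pow_succ, ih]; ext <;> simp
  have hcpow : c ^ p = c := by
    rw [hc, hscalar, inv_pow, ZMod.pow_card]
  have hs2 : (sqrt5 p) ^ 2 = (5 : Q5 p) := by
    rw [five_eq]
    ext <;> simp [sqrt5, pow_two]
  have hspow : (sqrt5 p) ^ p = (⟨((legendreSym p 5 : ℤ) : ZMod p), 0⟩ : Q5 p) * sqrt5 p := by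
    obtain ⟨k, hk⟩ := hodd
    have hp2k : p = 2 * k + 1 := by omega
    have hdiv : p / 2 = k := by omega
    calc (sqrt5 p) ^ p = ((sqrt5 p) ^ 2) ^ k * sqrt5 p := by rw [← pow_mul, ← pow_succ, ← hp2k]
      _ = (5 : Q5 p) ^ k * sqrt5 p := by rw [hs2]
      _ = _ := by
          congr 1
          rw [five_eq, hscalar]
          congr 1
          rw [← hdiv, legendreSym.eq_pow]
          norm_cast
  have hfrob : (1 + sqrt5 p) ^ p = 1 + (sqrt5 p) ^ p := by
    rw [add_pow_char]
    simp
  rw [halpha, mul_pow, hfrob, hspow, hcpow]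
  ext <;> simp [sqrt5, hc] <;> ring

lemma alpha_pow_p_one (hp2 : p ≠ 2) (hleg : legendreSym p 5 = 1) :
    (alpha p) ^ p = alpha p := by
  rw [alpha_pow_p hp2, hleg]
  ext <;> simp [alpha]

lemma cancel_alpha (hp2 : p ≠ 2) {x y : Q5 p} (h : x * alpha p = y * alpha p) : x = y := by
  have h2 := alpha_mul_pred (p := p) hp2
  calc x = x * (alpha p * (alpha p - 1)) := by rw [h2, mul_one]
    _ = (x * alpha p) * (alpha p - 1) := by ring
    _ = (y * alpha p) * (alpha p - 1) := by rw [h]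
    _ = y * (alpha p * (alpha p - 1)) := by ring
    _ = y := by rw [h2, mul_one]

lemma alpha_pow_sub_one (hp2 : p ≠ 2) (hleg : legendreSym p 5 = 1) :
    ∀ a : ℕ, (alpha p) ^ (p ^ a - 1) = 1 := by
  have hp : p.Prime := Fact.out
  have hp1 : 1 ≤ p := hp.one_lt.le
  have hpm1 : (alpha p) ^ (p - 1) = 1 := by
    have h : (alpha p) ^ (p - 1) * alpha p = 1 * alpha p := by
      rw [one_mul, ← pow_succ, Nat.sub_add_cancel hp1, alpha_pow_p_one hp2 hleg]
    exact cancel_alpha hp2 h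
  intro a
  induction a with
  | zero => simp
  | succ a ih =>
    have h1 : 1 ≤ p ^ a := Nat.one_le_pow _ _ hp.pos
    have h1' : 1 ≤ p ^ (a + 1) := Nat.one_le_pow _ _ hp.pos
    have hexp : p ^ (a + 1) - 1 = (p ^ a - 1) * p + (p - 1) := by
      zify [h1, h1', hp1]
      ring
    rw [hexp, pow_add, pow_mul, ih, one_pow, one_mul, hpm1]

lemma alpha_pow_p_neg (hp2 : p ≠ 2) (hleg : legendreSym p 5 = -1) :
    (alpha p) ^ (p + 1) = -1 := by
  have h2 := two_nz (p := p) hp2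
  have hβ : (alpha p) ^ p = 1 - alpha p := by
    rw [alpha_pow_p hp2, hleg]
    have hinv : (2 : ZMod p) * (2 : ZMod p)⁻¹ = 1 := mul_inv_cancel₀ h2
    ext
    · rw [sub_a, one_a]
      show (2:ZMod p)⁻¹ = 1 - (alpha p).a
      simp only [alpha]
      linear_combination hinv
    · rw [sub_b, one_b]
      show ((-1 : ℤ) : ZMod p) * (2:ZMod p)⁻¹ = 0 - (alpha p).b
      simp only [alpha]
      push_cast
      ring
  have hsq := alpha_sq (p := p) hp2
  calc (alpha p) ^ (p + 1) = (alpha p) ^ p * alpha p := by rw [pow_succ]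
    _ = (1 - alpha p) * alpha p := by rw [hβ]
    _ = alpha p - (alpha p) ^ 2 := by ring
    _ = -1 := by rw [hsq]; ring

lemma alpha_pow_neg_case (hp2 : p ≠ 2) (hleg : legendreSym p 5 = -1) :
    ∀ a : ℕ, (Odd a → (alpha p) ^ (p ^ a + 1) = -1) ∧
      (Even a → (alpha p) ^ (p ^ a - 1) = 1) := by
  have hp : p.Prime := Fact.out
  have hp1 : 1 ≤ p := hp.one_lt.le
  have hpodd : Odd p := hp.odd_of_ne_two hp2
  have hkey := alpha_pow_p_neg hp2 hleg
  intro a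
  induction a with
  | zero =>
    constructor
    · intro h; exact absurd h (by simp)
    · intro _; simp
  | succ a ih =>
    have h1 : 1 ≤ p ^ a := Nat.one_le_pow _ _ hp.pos
    have h1' : 1 ≤ p ^ (a + 1) := Nat.one_le_pow _ _ hp.pos
    have hple : p ≤ p ^ (a + 1) := by
      calc p = p ^ 1 := (pow_one p).symm
      _ ≤ p ^ (a+1) := Nat.pow_le_pow_right hp.pos (by omega)
    constructor
    · intro hodd
      have heven : Even a := by
        rcases Nat.even_or_odd a with h | h
        · exact h
        · exact absurd (by exact Odd.add_one h : Even (a+1)) (by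
            rw [Nat.even_iff, Nat.odd_iff] at *
            omega)
      have ha := ih.2 heven
      have hexp : p ^ (a+1) + 1 = (p ^ a - 1) * p + (p + 1) := by
        zify [h1, h1', hp1]
        ring
      rw [hexp, pow_add, pow_mul, ha, one_pow, one_mul, hkey]
    · intro heven
      have hodd : Odd a := by
        rcases Nat.even_or_odd a with h | h
        · exact absurd (by exact Even.add_one h : Odd (a+1)) (by
            rw [Nat.even_iff, Nat.odd_iff] at *
            omega)
        · exact h
      have ha := ih.1 hodd
      have hexp : p ^ (a+1) + p = (p ^ a + 1) * p := by ring
      have hexp2 : p ^ (a+1) + p = (p ^ (a+1) - 1) + (p + 1) := by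
        zify [h1', hp1]
        ring
      have hchain : (alpha p) ^ (p ^ (a+1) - 1) * (-1 : Q5 p) = -1 := by
        calc (alpha p) ^ (p ^ (a+1) - 1) * (-1 : Q5 p)
            = (alpha p) ^ (p ^ (a+1) - 1) * (alpha p) ^ (p + 1) := by rw [hkey]
          _ = (alpha p) ^ (p ^ (a+1) + p) := by rw [← pow_add, ← hexp2]
          _ = ((alpha p) ^ (p ^ a + 1)) ^ p := by rw [hexp, pow_mul]
          _ = (-1 : Q5 p) ^ p := by rw [ha]
          _ = -1 := hpodd.neg_one_pow
      linear_combination -hchain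

end Alpha

/-- The Lucas numbers: `L_0 = 2`, `L_1 = 1`, `L_{n+1} = L_n + L_{n−1}`. -/
def lucasNum : ℕ → ℤ
  | 0 => 2
  | 1 => 1
  | n + 2 => lucasNum (n + 1) + lucasNum n

lemma lucasNum_eq_fib : ∀ n : ℕ, lucasNum n = 2 * (Nat.fib (n+1) : ℤ) - Nat.fib n := by
  intro n
  induction n using Nat.twoStepInduction with
  | zero => simp [lucasNum]
  | one => simp [lucasNum]
  | more n ih1 ih2 =>
    show lucasNum (n+1) + lucasNum n = 2 * (Nat.fib (n+2+1) : ℤ) - Nat.fib (n+2)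
    have h3 : Nat.fib (n+2+1) = Nat.fib (n+1) + Nat.fib (n+1+1) := by
      rw [show n+2+1 = (n+1)+2 by ring, Nat.fib_add_two]
    have h2 : Nat.fib (n+2) = Nat.fib n + Nat.fib (n+1) := Nat.fib_add_two
    rw [ih1, ih2, h3, h2]
    push_cast
    ring

lemma cassini : ∀ n : ℕ, (Nat.fib (n+1) : ℤ)^2 - Nat.fib (n+1) * Nat.fib n - (Nat.fib n : ℤ)^2 = (-1)^n := by
  intro n
  induction n with
  | zero => simp
  | succ n ih =>
    rw [Nat.fib_add_two]
    push_cast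
    push_cast at ih
    rw [pow_succ]
    linear_combination (-1 : ℤ) * ih

lemma lucas_sq_sub (n : ℕ) (hn : Even n) :
    (lucasNum n)^2 - 5 * (Nat.fib n : ℤ)^2 = 4 := by
  have h := cassini n
  rw [hn.neg_one_pow] at h
  rw [lucasNum_eq_fib]
  push_cast
  linear_combination 4 * h


section Extract
open Q5
variable {p : ℕ} [Fact p.Prime]

lemma fib_dvd_of_alpha_pow (hp2 : p ≠ 2) {k : ℕ} {e : ℤ}
    (h : (alpha p) ^ (k+1) = ((e : ℤ) : Q5 p)) :
    (p:ℤ) ∣ (Nat.fib (k+1) : ℤ) ∧ (p:ℤ) ∣ ((Nat.fib k : ℤ) - e) := by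
  have h2 := two_nz (p := p) hp2
  rw [pow_eq_fib _ (alpha_sq hp2)] at h
  have hb := congrArg Q5.b h
  have ha := congrArg Q5.a h
  simp only [add_b, add_a, mul_b, mul_a, natCast_a, natCast_b, intCast_a, intCast_b,
    alpha, zero_mul, mul_zero, add_zero, zero_add] at hb ha
  -- hb : (fib (k+1) : ZMod p) * 2⁻¹ = 0
  have hfib : ((Nat.fib (k+1) : ℤ) : ZMod p) = 0 := by
    have := congrArg (· * (2 : ZMod p)) hb
    simp only [zero_mul, mul_assoc, inv_mul_cancel₀ h2, mul_one] at this
    push_cast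
    convert this using 2
  constructor
  · rwa [ZMod.intCast_zmod_eq_zero_iff_dvd] at hfib
  · rw [← ZMod.intCast_zmod_eq_zero_iff_dvd]
    push_cast
    push_cast at hfib
    rw [hfib, zero_mul, zero_add] at ha
    rw [ha]
    ring

lemma lucas_key (hp2 : p ≠ 2) {m : ℕ} {e : ℤ} (hm : m ≠ 0) (heven : Even m)
    (he : e = 1 ∨ e = -1)
    (h : (alpha p) ^ m = ((e : ℤ) : Q5 p)) :
    (p:ℤ)^2 ∣ lucasNum m - 2*e := by
  have hp : p.Prime := Fact.out
  obtain ⟨k, rfl⟩ : ∃ k, m = k + 1 := ⟨m - 1, by omega⟩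
  obtain ⟨h1, h2⟩ := fib_dvd_of_alpha_pow hp2 h
  have hL : lucasNum (k+1) - 2*e = (Nat.fib (k+1) : ℤ) + 2*((Nat.fib k : ℤ) - e) := by
    rw [lucasNum_eq_fib]
    have hf : Nat.fib (k+1+1) = Nat.fib k + Nat.fib (k+1) := Nat.fib_add_two
    rw [hf]
    push_cast
    ring
  have hdvd1 : (p:ℤ) ∣ lucasNum (k+1) - 2*e := by
    rw [hL]
    exact dvd_add h1 (Dvd.dvd.mul_left h2 2)
  have hsq := lucas_sq_sub (k+1) heven
  have he2 : e^2 = 1 := by rcases he with rfl | rfl <;> norm_num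
  have hprod : (lucasNum (k+1) - 2*e) * (lucasNum (k+1) + 2*e) = 5 * (Nat.fib (k+1) : ℤ)^2 := by
    linear_combination hsq - 4 * he2
  have hpne : ¬ (p:ℤ) ∣ (lucasNum (k+1) + 2*e) := by
    intro hdvd
    have h4e : (p:ℤ) ∣ 4*e := by
      have h4 : (4:ℤ)*e = (lucasNum (k+1) + 2*e) - (lucasNum (k+1) - 2*e) := by ring
      rw [h4]
      exact dvd_sub hdvd hdvd1
    have h4' : (p:ℤ) ∣ 4 := by
      rcases he with rfl | rfl
      · simpa using h4e
      · rw [show (4:ℤ)*(-1) = -4 by ring, dvd_neg] at h4e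
        exact h4e
    have hn : p ∣ 4 := by exact_mod_cast h4'
    have hn2 : p ∣ 2^2 := by rwa [show (2:ℕ)^2 = 4 by norm_num]
    have : p ∣ 2 := hp.dvd_of_dvd_pow hn2
    rcases (Nat.Prime.eq_one_or_self_of_dvd (by norm_num) p this).symm with h' | h'
    · exact hp2 h'
    · exact hp.one_lt.ne' h'
  obtain ⟨t, ht⟩ := hdvd1
  have hF2 : (p:ℤ)^2 ∣ 5 * (Nat.fib (k+1) : ℤ)^2 := by
    obtain ⟨u, hu⟩ := h1
    exact ⟨5 * u^2, by rw [hu]; ring⟩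
  rw [← hprod, ht] at hF2
  obtain ⟨v, hv⟩ := hF2
  have hdt : (p:ℤ) ∣ t * (lucasNum (k+1) + 2*e) := by
    refine ⟨v, ?_⟩
    have hpne0 : (p:ℤ) ≠ 0 := by exact_mod_cast hp.ne_zero
    have hcan : (p:ℤ) * (t * (lucasNum (k+1) + 2*e)) = (p:ℤ) * ((p:ℤ) * v) := by
      linear_combination hv
    exact mul_left_cancel₀ hpne0 hcan
  have hprime : Prime (p:ℤ) := Int.prime_iff_natAbs_prime.mpr (by simpa using hp)
  rcases hprime.dvd_mul.mp hdt with hdvd | hdvd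
  · obtain ⟨w, hw⟩ := hdvd
    exact ⟨w, by rw [ht, hw]; ring⟩
  · exact absurd hdvd hpne

end Extract

lemma key_cong (p : ℕ) (hp : p.Prime) (hp2 : p ≠ 2) (hp5 : p ≠ 5) (a : ℕ) (ha : 0 < a) :
    ∃ (J : ℤ) (m : ℕ), J = jacobiSym ((p:ℤ)^a) 5 ∧ (J = 1 ∨ J = -1) ∧
      ((p:ℤ)^a = (m:ℤ) + J) ∧ Even m ∧ (p:ℤ)^2 ∣ lucasNum m - 2*J := by
  haveI : Fact p.Prime := ⟨hp⟩
  haveI : Fact (Nat.Prime 5) := ⟨by norm_num⟩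
  have h5nz : ((5:ℤ) : ZMod p) ≠ 0 := by
    rw [Ne, ZMod.intCast_zmod_eq_zero_iff_dvd]
    intro hdvd
    have : p ∣ 5 := by exact_mod_cast hdvd
    exact hp5 ((Nat.prime_dvd_prime_iff_eq hp (by norm_num)).mp this)
  have hJrel : jacobiSym ((p:ℤ)^a) 5 = (legendreSym p 5)^a := by
    rw [jacobiSym.pow_left]
    congr 1
    rw [← jacobiSym.legendreSym.to_jacobiSym 5 (p:ℤ)]
    exact (legendreSym.quadratic_reciprocity_one_mod_four (by norm_num) hp2).symm
  have hodd : Odd (p ^ a) := (hp.odd_of_ne_two hp2).pow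
  have hp3 : 3 ≤ p := by
    have := hp.two_le
    omega
  have hpa3 : 3 ≤ p ^ a := le_trans hp3 (Nat.le_self_pow (by omega) p)
  rcases legendreSym.eq_one_or_neg_one p (a := 5) h5nz with hχ | hχ
  · -- legendreSym p 5 = 1
    refine ⟨1, p ^ a - 1, ?_, Or.inl rfl, ?_, ?_, ?_⟩
    · rw [hJrel, hχ, one_pow]
    · push_cast [Nat.cast_sub (by omega : 1 ≤ p ^ a)]
      ring
    · exact Nat.Odd.sub_odd hodd odd_one
    · refine lucas_key hp2 (by omega) (Nat.Odd.sub_odd hodd odd_one) (Or.inl rfl) ?_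
      rw [alpha_pow_sub_one hp2 hχ a]
      push_cast
      rfl
  · -- legendreSym p 5 = -1
    rcases Nat.even_or_odd a with haeven | haodd
    · refine ⟨1, p ^ a - 1, ?_, Or.inl rfl, ?_, ?_, ?_⟩
      · rw [hJrel, hχ, haeven.neg_one_pow]
      · push_cast [Nat.cast_sub (by omega : 1 ≤ p ^ a)]
        ring
      · exact Nat.Odd.sub_odd hodd odd_one
      · refine lucas_key hp2 (by omega) (Nat.Odd.sub_odd hodd odd_one) (Or.inl rfl) ?_
        rw [(alpha_pow_neg_case hp2 hχ a).2 haeven]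
        push_cast
        rfl
    · refine ⟨-1, p ^ a + 1, ?_, Or.inr rfl, ?_, ?_, ?_⟩
      · rw [hJrel, hχ, haodd.neg_one_pow]
      · push_cast
        ring
      · exact Odd.add_one hodd
      · refine lucas_key hp2 (by omega) (Odd.add_one hodd) (Or.inr rfl) ?_
        rw [(alpha_pow_neg_case hp2 hχ a).1 haodd]
        push_cast
        rfl

lemma rat_identity (m : ℕ) (e : ℤ) (he : e = 1 ∨ e = -1) (hm : Even m) (q : ℕ)
    (hq : (q:ℤ) = (m:ℤ) + e) :
    (((lucasNum q : ℚ) - 1) / 5 - (e:ℚ) * (Nat.fib q : ℚ) + 1) - (-(Nat.fib m : ℚ)^2/2)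
      = ((lucasNum m : ℚ) - 2*(e:ℚ))^2 / 10 := by
  rcases he with rfl | rfl
  · have hq' : q = m + 1 := by exact_mod_cast hq
    subst hq'
    have hc := cassini m
    rw [hm.neg_one_pow] at hc
    have hcQ : (Nat.fib (m+1) : ℚ)^2 - (Nat.fib (m+1):ℚ) * (Nat.fib m:ℚ) - (Nat.fib m:ℚ)^2 = 1 := by
      exact_mod_cast hc
    have hLq : (lucasNum (m+1) : ℚ) = 2*(Nat.fib m : ℚ) + (Nat.fib (m+1) : ℚ) := by
      have h1 := lucasNum_eq_fib (m+1)
      have hf2 : (Nat.fib (m+1+1) : ℤ) = Nat.fib m + Nat.fib (m+1) := by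
        rw [Nat.fib_add_two]; push_cast; ring
      rw [hf2] at h1
      have h1' : lucasNum (m+1) = 2*(Nat.fib m : ℤ) + (Nat.fib (m+1) : ℤ) := by omega
      exact_mod_cast h1'
    have hLm : (lucasNum m : ℚ) = 2*(Nat.fib (m+1) : ℚ) - (Nat.fib m : ℚ) := by
      exact_mod_cast lucasNum_eq_fib m
    rw [hLq, hLm]
    push_cast
    field_simp
    linear_combination (-40 : ℚ) * hcQ
  · obtain ⟨q', rfl⟩ : ∃ q', m = q' + 1 := by
      refine ⟨m - 1, ?_⟩
      omega
    have hq' : q' = q := by omega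
    subst hq'
    have hqodd : Odd q' := by
      rcases Nat.even_or_odd q' with h | h
      · exact absurd hm (by simpa using h.add_one)
      · exact h
    have hc := cassini q'
    rw [hqodd.neg_one_pow] at hc
    have hcQ : (Nat.fib (q'+1) : ℚ)^2 - (Nat.fib (q'+1):ℚ) * (Nat.fib q':ℚ) - (Nat.fib q':ℚ)^2 = -1 := by
      exact_mod_cast hc
    have hLq : (lucasNum q' : ℚ) = 2*(Nat.fib (q'+1) : ℚ) - (Nat.fib q' : ℚ) := by
      exact_mod_cast lucasNum_eq_fib q'
    have hLm : (lucasNum (q'+1) : ℚ) = (Nat.fib (q'+1) : ℚ) + 2*(Nat.fib q' : ℚ) := by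
      have h1 := lucasNum_eq_fib (q'+1)
      have hf2 : (Nat.fib (q'+1+1) : ℤ) = Nat.fib q' + Nat.fib (q'+1) := by
        rw [Nat.fib_add_two]; push_cast; ring
      rw [hf2] at h1
      have h1' : lucasNum (q'+1) = (Nat.fib (q'+1) : ℤ) + 2*(Nat.fib q' : ℤ) := by omega
      exact_mod_cast h1'
    rw [hLq, hLm]
    push_cast
    field_simp
    linear_combination (40 : ℚ) * hcQ

theorem lucas_fib_cong (p : ℕ) (hp : p.Prime) (hp2 : p ≠ 2) (hp5 : p ≠ 5)
    (a : ℕ) (ha : 0 < a) :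
    ratModCast p 4
      (((lucasNum (p ^ a) : ℚ) - 1) / 5 -
          (jacobiSym ((p : ℤ) ^ a) 5 : ℚ) * (Nat.fib (p ^ a) : ℚ) + 1)
      (-(Nat.fib (((p : ℤ) ^ a - jacobiSym ((p : ℤ) ^ a) 5).toNat) : ℚ) ^ 2 / 2) := by
  obtain ⟨J, m, hJ, he, hqm, hmeven, hdvd⟩ := key_cong p hp hp2 hp5 a ha
  obtain ⟨t, ht⟩ := hdvd
  refine ⟨(t:ℚ)^2 / 10, ?_, ?_⟩
  · have hmnat : ((p:ℤ)^a - jacobiSym ((p:ℤ)^a) 5).toNat = m := by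
      rw [← hJ]
      omega
    have hqcast : ((p ^ a : ℕ) : ℤ) = (m:ℤ) + J := by
      push_cast
      exact hqm
    have hid := rat_identity m J he hmeven (p ^ a) hqcast
    rw [hmnat, ← hJ]
    rw [hid]
    have htQ : (lucasNum m : ℚ) - 2*(J:ℚ) = (p:ℚ)^2 * (t:ℚ) := by
      exact_mod_cast ht
    rw [htQ]
    ring
  · intro hden
    have hden10 : (((t:ℚ)^2 / 10).den : ℤ) ∣ 10 := by
      have h1 : ((t:ℚ)^2 / 10) = ((t^2 : ℤ) : ℚ) / ((10:ℤ) : ℚ) := by push_cast; ring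
      rw [h1, ← Rat.divInt_eq_div]
      exact Rat.den_dvd _ _
    have hdvd10 : p ∣ 10 := by
      have h2 : (((t:ℚ)^2 / 10).den : ℕ) ∣ 10 := by exact_mod_cast hden10
      exact dvd_trans hden h2
    have h25 : p ∣ 2 * 5 := by rwa [show 2*5 = 10 by norm_num]
    rcases (Nat.Prime.dvd_mul hp).mp h25 with h | h
    · exact hp2 ((Nat.prime_dvd_prime_iff_eq hp (by norm_num)).mp h)
    · exact hp5 ((Nat.prime_dvd_prime_iff_eq hp (by norm_num)).mp h)
end

section
/- Let p be an odd prime, a a positive integer, and m an integer not divisible by p. Then ∑_{k=0}^{(p^a−1)/2} C(2k,k+1)/m^k ≡ ((m−2)/2)·∑_{k=0}^{(p^a−1)/2} C(2k,k)/m^k − m/2 + 2p·δ_{a,1}·(−m/p) (mod p^2), where δ_{a,1} equals 1 if a = 1 and 0 otherwise, and where the congruence is between rational numbers whose denominators are coprime to p (i.e., it holds in the localization ℤ_(p)). -/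
private lemma pascal4 (n : ℕ) : Nat.choose (2*n+4) (n+2) =
    2 * Nat.choose (2*n+2) (n+2) + 2 * Nat.choose (2*n+2) (n+1) := by
  have h0 : Nat.choose (2*n+2) (n+2) = Nat.choose (2*n+2) n := by
    have := Nat.choose_symm (n := 2*n+2) (k := n+2) (by omega)
    simpa [show 2*n+2-(n+2) = n by omega] using this.symm
  have h1 : Nat.choose (2*n+4) (n+2) = Nat.choose (2*n+3) (n+1) + Nat.choose (2*n+3) (n+2) :=
    Nat.choose_succ_succ (2*n+3) (n+1)
  have h2 : Nat.choose (2*n+3) (n+1) = Nat.choose (2*n+2) n + Nat.choose (2*n+2) (n+1) :=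
    Nat.choose_succ_succ (2*n+2) n
  have h3 : Nat.choose (2*n+3) (n+2) = Nat.choose (2*n+2) (n+1) + Nat.choose (2*n+2) (n+2) :=
    Nat.choose_succ_succ (2*n+2) (n+1)
  omega

private lemma sum_identity (q : ℚ) (hq : q ≠ 0) (n : ℕ) :
    ∑ k ∈ Finset.range (n+1), (Nat.choose (2*k) (k+1) : ℚ) / q ^ k
    = (q - 2)/2 * ∑ k ∈ Finset.range (n+1), (Nat.choose (2*k) k : ℚ) / q ^ k
      - q/2 + (Nat.choose (2*n+2) (n+1) : ℚ) / (2 * q ^ n) := by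
  induction n with
  | zero => norm_num; ring
  | succ n ih =>
    rw [Finset.sum_range_succ, ih,
      Finset.sum_range_succ (fun k => (Nat.choose (2*k) k : ℚ) / q ^ k) (n+1)]
    have hc : ((Nat.choose (2*(n+1)+2) (n+1+1) : ℚ))
        = 2 * Nat.choose (2*n+2) (n+2) + 2 * Nat.choose (2*n+2) (n+1) := by
      have := pascal4 n
      rw [show 2*(n+1)+2 = 2*n+4 by ring, show n+1+1 = n+2 by ring]
      exact_mod_cast this
    have hc2 : ((Nat.choose (2*(n+1)) (n+1+1) : ℚ)) = Nat.choose (2*n+2) (n+2) := by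
      norm_num [show 2*(n+1) = 2*n+2 by ring]
    rw [hc, hc2, show 2*(n+1) = 2*n+2 from by ring]
    field_simp
    ring

private lemma pow_dvd_choose' (p a N : ℕ) (hp : p.Prime) (hN : 2*N+1 = p^a) (hN1 : 1 ≤ N) :
    p^a ∣ Nat.choose (p^a) N := by
  set M := p^a with hM
  have key : M * Nat.choose (M-1) (N-1) = Nat.choose M N * N := by
    have := Nat.add_one_mul_choose_eq (M-1) (N-1)
    have e1 : M-1+1 = M := by omega
    have e2 : N-1+1 = N := by omega
    rwa [e1, e2] at this
  have hdvd : M ∣ Nat.choose M N * N := ⟨_, key.symm⟩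
  have ha : a ≠ 0 := by
    rintro rfl; simp [pow_zero] at hM; omega
  have hpM : p ∣ M := hM ▸ dvd_pow_self p ha
  have hcop : Nat.Coprime p N := by
    rw [hp.coprime_iff_not_dvd]
    intro h
    have h2 : p ∣ 2*N := h.mul_left 2
    have : p ∣ 1 := by
      have := Nat.dvd_sub hpM h2
      simpa [show M - 2*N = 1 by omega] using this
    exact hp.one_lt.ne' (Nat.dvd_one.mp this)
  exact (hcop.pow_left a).dvd_of_dvd_mul_right hdvd

private lemma choose_sub_one (p : ℕ) (hp : p.Prime) (k : ℕ) (hk : k ≤ p - 1) :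
    ((Nat.choose (p-1) k : ℤ) : ZMod p) = (-1)^k := by
  induction k with
  | zero => simp
  | succ k ih =>
    have hk' : k ≤ p - 1 := by omega
    have hps : p ∣ Nat.choose p (k+1) := hp.dvd_choose_self (by omega) (by omega)
    have pas : Nat.choose p (k+1) = Nat.choose (p-1) k + Nat.choose (p-1) (k+1) := by
      have := Nat.choose_succ_succ (p-1) k
      rwa [show (p-1).succ = p by omega] at this
    have h0 : ((Nat.choose p (k+1) : ℤ) : ZMod p) = 0 := by
      rw [ZMod.intCast_zmod_eq_zero_iff_dvd]
      exact_mod_cast Int.natCast_dvd_natCast.mpr hps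
    have := ih hk'
    push_cast [pas] at h0
    push_cast
    push_cast at this
    rw [this] at h0
    linear_combination h0

private lemma key_a1 (p N : ℕ) (hp : p.Prime) (hN : 2*N+1 = p) (m : ℤ)
    (hm : ¬((p:ℤ) ∣ m)) :
    (p:ℤ)^2 ∣ (Nat.choose p N : ℤ) - 2*p*(jacobiSym (-m) p)*m^N := by
  haveI : Fact p.Prime := ⟨hp⟩
  have hp3 : 3 ≤ p := by have := hp.two_le; omega
  have hN1 : 1 ≤ N := by omega
  obtain ⟨c, hc⟩ := hp.dvd_choose_self (k := N) (by omega) (by omega)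
  have key : Nat.choose (p-1) (N-1) = c * N := by
    have h := Nat.add_one_mul_choose_eq (p-1) (N-1)
    rw [show p-1+1 = p by omega, show N-1+1 = N by omega, hc] at h
    exact Nat.eq_of_mul_eq_mul_left hp.pos (h.trans (by ring))
  have hmz : ((m : ZMod p)) ≠ 0 := by
    rw [Ne, ZMod.intCast_zmod_eq_zero_iff_dvd]; exact hm
  have hm2N : (m : ZMod p)^(2*N) = 1 := by
    have := ZMod.pow_card_sub_one_eq_one hmz
    rwa [show p - 1 = 2*N by omega] at this
  have e1 : ((c : ZMod p)) * N = (-1)^(N-1) := by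
    have := choose_sub_one p hp (N-1) (by omega)
    rw [key] at this
    push_cast at this
    linear_combination this
  have e2 : ((N : ZMod p)) * 2 + 1 = 0 := by
    have : ((2*N+1 : ℕ) : ZMod p) = 0 := by rw [hN]; exact ZMod.natCast_self p
    push_cast at this
    linear_combination this
  have e3 : ((-1 : ZMod p))^N = (-1)^(N-1) * (-1) := by
    rw [← pow_succ, show N-1+1 = N by omega]
  have hcval : ((c : ZMod p)) = 2*(-1)^N := by
    linear_combination -2*e1 + (c : ZMod p)*e2 - 2*e3
  have hleg : ((jacobiSym (-m) p : ℤ) : ZMod p) = ((-m : ℤ) : ZMod p)^N := by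
    rw [← jacobiSym.legendreSym.to_jacobiSym]
    have := legendreSym.eq_pow p (-m)
    rwa [show p/2 = N by omega] at this
  have hdvd : (p:ℤ) ∣ (c:ℤ) - 2*(jacobiSym (-m) p)*m^N := by
    rw [← ZMod.intCast_zmod_eq_zero_iff_dvd]
    push_cast
    rw [hcval]
    have h4 : ((jacobiSym (-m) p : ℤ) : ZMod p) * (m:ZMod p)^N = (-1)^N := by
      rw [hleg]
      push_cast
      rw [neg_pow]
      have : (m : ZMod p)^N * (m:ZMod p)^N = 1 := by
        rw [← pow_add, show N+N = 2*N by ring]; exact hm2N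
      linear_combination (-1:ZMod p)^N * this
    push_cast at h4
    linear_combination -2 * h4
  obtain ⟨t, ht⟩ := hdvd
  refine ⟨t, ?_⟩
  rw [hc]
  push_cast
  linear_combination (p:ℤ) * ht

private theorem sum_choose_succ_div_m_aux (p : ℕ) (hp : p.Prime) (hp2 : p ≠ 2)
    (a : ℕ) (ha : 0 < a) (m : ℤ) (hm : ¬ ((p : ℤ) ∣ m)) :
    ∃ z : ℚ,
      (∑ k ∈ Finset.range ((p ^ a - 1) / 2 + 1),
        (Nat.choose (2 * k) (k + 1) : ℚ) / (m : ℚ) ^ k)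
      - (((m : ℚ) - 2) / 2 *
          ∑ k ∈ Finset.range ((p ^ a - 1) / 2 + 1),
            (Nat.choose (2 * k) k : ℚ) / (m : ℚ) ^ k
        - (m : ℚ) / 2
        + 2 * p * (if a = 1 then (1 : ℚ) else 0) * (jacobiSym (-m) p : ℚ))
      = (p : ℚ) ^ 2 * z ∧ ¬ (p ∣ z.den) := by
  have hp3 : 3 ≤ p := by have := hp.two_le; omega
  set M := p ^ a with hMdef
  have hM3 : 3 ≤ M := le_trans hp3 (Nat.le_self_pow ha.ne' p)
  have hModd : Odd M := (hp.odd_of_ne_two hp2).pow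
  set N := (M - 1) / 2 with hNdef
  have hMN : 2 * N + 1 = M := by
    obtain ⟨j, hj⟩ := hModd; omega
  have hN1 : 1 ≤ N := by omega
  have hm0 : m ≠ 0 := by rintro rfl; exact hm (dvd_zero _)
  have hq0 : (m : ℚ) ≠ 0 := Int.cast_ne_zero.mpr hm0
  -- the exact summation identity
  have hsum := sum_identity (m : ℚ) hq0 N
  -- C(2N+2, N+1) = 2 * C(M, N)
  have hch : Nat.choose (2*N+2) (N+1) = 2 * Nat.choose M N := by
    have h1 : Nat.choose (2*N+2) (N+1) = Nat.choose (2*N+1) N + Nat.choose (2*N+1) (N+1) :=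
      Nat.choose_succ_succ (2*N+1) N
    have h2 : Nat.choose (2*N+1) (N+1) = Nat.choose (2*N+1) N := by
      have := Nat.choose_symm (n := 2*N+1) (k := N+1) (by omega)
      simpa [show 2*N+1-(N+1) = N by omega] using this.symm
    rw [h1, h2, hMN] at *
    omega
  -- key divisibility
  set ε : ℤ := jacobiSym (-m) p with hε
  set δ : ℤ := if a = 1 then 1 else 0 with hδ
  have hdvd : (p:ℤ)^2 ∣ (Nat.choose M N : ℤ) - 2*p*δ*ε*m^N := by
    by_cases h1 : a = 1
    · subst h1
      simp only [hδ, if_pos rfl, mul_one]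
      have hMp : M = p := by rw [hMdef]; exact pow_one p
      rw [hMp] at hMN ⊢
      simpa using key_a1 p N hp hMN m hm
    · simp only [hδ, if_neg h1, mul_zero, zero_mul, sub_zero]
      have h2a : 2 ≤ a := by omega
      have : (p:ℕ)^a ∣ Nat.choose M N := pow_dvd_choose' p a N hp hMN hN1
      have h22 : (p:ℕ)^2 ∣ Nat.choose M N := dvd_trans (pow_dvd_pow p h2a) this
      exact_mod_cast Int.natCast_dvd_natCast.mpr h22
  obtain ⟨t, ht⟩ := hdvd
  refine ⟨(t : ℚ) / (m : ℚ)^N, ?_, ?_⟩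
  · -- algebraic computation
    rw [hsum, hch]
    have htQ : ((Nat.choose M N : ℚ)) - 2*p*(δ:ℚ)*(ε:ℚ)*(m:ℚ)^N = (p:ℚ)^2 * t := by
      exact_mod_cast congrArg (fun x : ℤ => (x : ℚ)) ht
    have hδQ : ((δ:ℚ)) = if a = 1 then (1:ℚ) else 0 := by
      by_cases h1 : a = 1 <;> simp [hδ, h1]
    rw [← hδQ]
    have hqN : (m:ℚ)^N ≠ 0 := pow_ne_zero _ hq0
    push_cast
    field_simp
    linear_combination 2 * htQ
  · -- denominator
    intro hpd
    have heq : (t:ℚ)/(m:ℚ)^N = Rat.divInt t (m^N) := by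
      rw [Rat.divInt_eq_div]; push_cast; ring
    have hden : ((((t:ℚ)/(m:ℚ)^N).den : ℤ)) ∣ (m^N : ℤ) := by
      rw [heq]; exact Rat.den_dvd t (m^N)
    have hp' : Prime (p:ℤ) := Int.prime_iff_natAbs_prime.mpr (by simpa using hp)
    have h1 : (p:ℤ) ∣ (m^N : ℤ) :=
      dvd_trans (Int.natCast_dvd_natCast.mpr hpd) hden
    exact hm (hp'.dvd_of_dvd_pow h1)


theorem sum_choose_succ_div_m (p : ℕ) (hp : p.Prime) (hp2 : p ≠ 2)
    (a : ℕ) (ha : 0 < a) (m : ℤ) (hm : ¬ ((p : ℤ) ∣ m)) :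
    ratModCast p 2
      (∑ k ∈ Finset.range ((p ^ a - 1) / 2 + 1),
        (Nat.choose (2 * k) (k + 1) : ℚ) / (m : ℚ) ^ k)
      (((m : ℚ) - 2) / 2 *
          ∑ k ∈ Finset.range ((p ^ a - 1) / 2 + 1),
            (Nat.choose (2 * k) k : ℚ) / (m : ℚ) ^ k
        - (m : ℚ) / 2
        + 2 * p * (if a = 1 then (1 : ℚ) else 0) * (jacobiSym (-m) p : ℚ)) :=
  sum_choose_succ_div_m_aux p hp hp2 a ha m hm
end

section
/- For every integer m and every natural number n, ∑_{k=0}^{n} (2 − (m−4)·k)·C(2k,k)·m^{n−k} = 2·(2n+1)·C(2n,n); equivalently, for m ≠ 0, ∑_{k=0}^{n} (1 − ((m−4)/2)·k)·C(2k,k)/m^k = (2n+1)·C(2n,n)/m^n. -/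
theorem central_binom_int (m : ℤ) (n : ℕ) :
    ∑ k ∈ Finset.range (n + 1),
        (2 - (m - 4) * k) * (Nat.choose (2 * k) k : ℤ) * m ^ (n - k)
      = 2 * (2 * n + 1) * (Nat.choose (2 * n) n : ℤ) := by
  induction n with
  | zero => simp
  | succ n ih =>
    rw [Finset.sum_range_succ]
    have hS : ∑ k ∈ Finset.range (n + 1),
        (2 - (m - 4) * k) * (Nat.choose (2 * k) k : ℤ) * m ^ (n + 1 - k)
        = m * ∑ k ∈ Finset.range (n + 1),
          (2 - (m - 4) * k) * (Nat.choose (2 * k) k : ℤ) * m ^ (n - k) := by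
      rw [Finset.mul_sum]
      refine Finset.sum_congr rfl fun k hk => ?_
      have hkn : k ≤ n := Nat.lt_succ_iff.mp (Finset.mem_range.mp hk)
      rw [show n + 1 - k = (n - k) + 1 from by omega, pow_succ]
      ring
    rw [hS, ih]
    have h : ((n : ℤ) + 1) * (Nat.choose (2 * (n + 1)) (n + 1) : ℤ)
        = 2 * (2 * n + 1) * (Nat.choose (2 * n) n : ℤ) := by
      have := Nat.succ_mul_centralBinom_succ n
      simp only [Nat.centralBinom] at this
      exact_mod_cast congrArg (Nat.cast : ℕ → ℤ) this
    have hne : ((n : ℤ) + 1) ≠ 0 := by positivity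
    apply mul_left_cancel₀ hne
    simp only [Nat.sub_self, pow_zero]
    push_cast
    linear_combination (2 - (m - 4) * ((n:ℤ)+1) - 2*(2*(n:ℤ)+3)) * h
theorem central_binom_identity (m : ℤ) (n : ℕ) :
    (∑ k ∈ Finset.range (n + 1),
        (2 - (m - 4) * k) * (Nat.choose (2 * k) k : ℤ) * m ^ (n - k)
      = 2 * (2 * n + 1) * (Nat.choose (2 * n) n : ℤ)) ∧
    (m ≠ 0 →
      ∑ k ∈ Finset.range (n + 1),
          (1 - ((m : ℚ) - 4) / 2 * k) * (Nat.choose (2 * k) k : ℚ) / (m : ℚ) ^ k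
        = (2 * n + 1) * (Nat.choose (2 * n) n : ℚ) / (m : ℚ) ^ n) := by
  refine ⟨central_binom_int m n, fun hm => ?_⟩
  have hmq : (m : ℚ) ≠ 0 := Int.cast_ne_zero.mpr hm
  have H : ∑ k ∈ Finset.range (n + 1),
      (2 - ((m : ℚ) - 4) * k) * (Nat.choose (2 * k) k : ℚ) * (m : ℚ) ^ (n - k)
      = 2 * (2 * n + 1) * (Nat.choose (2 * n) n : ℚ) := by
    exact_mod_cast congrArg (Int.cast : ℤ → ℚ) (central_binom_int m n)
  have key : ∑ k ∈ Finset.range (n + 1),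
      (1 - ((m : ℚ) - 4) / 2 * k) * (Nat.choose (2 * k) k : ℚ) / (m : ℚ) ^ k
      = (∑ k ∈ Finset.range (n + 1),
        (2 - ((m : ℚ) - 4) * k) * (Nat.choose (2 * k) k : ℚ) * (m : ℚ) ^ (n - k))
        / (2 * (m : ℚ) ^ n) := by
    rw [Finset.sum_div]
    refine Finset.sum_congr rfl fun k hk => ?_
    have hkn : k ≤ n := Nat.lt_succ_iff.mp (Finset.mem_range.mp hk)
    have hpow : (m : ℚ) ^ (n - k) * (m : ℚ) ^ k = (m : ℚ) ^ n := by
      rw [← pow_add, Nat.sub_add_cancel hkn]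
    rw [← hpow]
    field_simp
  rw [key, H]
  field_simp
end

section
/- Let p be an odd prime, a a positive integer, and m an integer not divisible by p. Then ((m−4)/2)·∑_{k=0}^{(p^a−1)/2} k·C(2k,k)/m^k ≡ ∑_{k=0}^{(p^a−1)/2} C(2k,k)/m^k − p^a·(−m/p^a) (mod p^{a+1}), where the congruence is between rational numbers whose denominators are coprime to p (i.e., it holds in the localization ℤ_(p)). -/
open Finset Nat

/-- Telescoping identity for partial sums of central binomial coefficients. -/
theorem aux_telescope (x : ℚ) (hx : x ≠ 0) (n : ℕ) :
    (∑ k ∈ range (n + 1), (Nat.choose (2 * k) k : ℚ) / x ^ k)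
      - (x - 4) / 2 * ∑ k ∈ range (n + 1), (k : ℚ) * (Nat.choose (2 * k) k : ℚ) / x ^ k
    = (2 * n + 1) * (Nat.choose (2 * n) n : ℚ) / x ^ n := by
  induction n with
  | zero => norm_num
  | succ n ih =>
    rw [Finset.sum_range_succ (fun k => (Nat.choose (2 * k) k : ℚ) / x ^ k) (n + 1),
      Finset.sum_range_succ (fun k => (k : ℚ) * (Nat.choose (2 * k) k : ℚ) / x ^ k) (n + 1)]
    have key : ((n : ℚ) + 1) * (Nat.choose (2 * (n + 1)) (n + 1) : ℚ)
        = 2 * (2 * n + 1) * (Nat.choose (2 * n) n : ℚ) := by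
      have h2 := congrArg (Nat.cast (R := ℚ)) (Nat.succ_mul_centralBinom_succ n)
      push_cast [Nat.centralBinom] at h2
      linarith
    have hxn : x ^ n ≠ 0 := pow_ne_zero _ hx
    have step : (Nat.choose (2 * (n + 1)) (n + 1) : ℚ) / x ^ (n + 1)
        - (x - 4) / 2 * (((n : ℚ) + 1) * (Nat.choose (2 * (n + 1)) (n + 1) : ℚ) / x ^ (n + 1))
        = (2 * (n + 1 : ℕ) + 1) * (Nat.choose (2 * (n + 1)) (n + 1) : ℚ) / x ^ (n + 1)
          - (2 * n + 1) * (Nat.choose (2 * n) n : ℚ) / x ^ n := by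
      rw [pow_succ]
      push_cast
      field_simp
      linear_combination (-x) * key
    push_cast at step ⊢
    linear_combination ih + step

/-- `C(p-1, j) ≡ (-1)^j mod p` for `j < p`. -/
theorem aux_choose_prime_sub_one (p : ℕ) [hp : Fact p.Prime] :
    ∀ j, j < p → ((Nat.choose (p - 1) j : ℕ) : ZMod p) = (-1) ^ j := by
  intro j
  induction j with
  | zero => simp
  | succ j ih =>
    intro hj
    have ihj := ih (lt_trans (Nat.lt_succ_self j) hj)
    have hrec := Nat.choose_succ_right_eq (p - 1) j
    have hsub : p - 1 - j = p - (j + 1) := by omega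
    have hcast := congrArg (Nat.cast (R := ZMod p)) hrec
    push_cast at hcast
    rw [hsub, Nat.cast_sub (by omega)] at hcast
    have hne : ((j : ZMod p) + 1) ≠ 0 := by
      have : ((j + 1 : ℕ) : ZMod p) ≠ 0 := by
        rw [Ne, ZMod.natCast_eq_zero_iff]
        exact fun h => absurd (Nat.le_of_dvd (by omega) h) (by omega)
      push_cast at this
      exact this
    apply mul_right_cancel₀ hne
    rw [hcast, ihj]
    simp [CharP.cast_eq_zero]
    ring

/-- `C(p^a - 1, k) ≡ (-1)^k mod p` for `k < p^a`, `p` an odd prime. -/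
theorem aux_choose_prime_pow_sub_one (p : ℕ) [hp : Fact p.Prime] (hodd : Odd p) :
    ∀ a : ℕ, ∀ k, k < p ^ a → ((Nat.choose (p ^ a - 1) k : ℕ) : ZMod p) = (-1) ^ k := by
  intro a
  induction a with
  | zero => intro k hk; rw [pow_zero] at hk; interval_cases k; simp
  | succ a ih =>
    intro k hk
    have h2 : 2 ≤ p := hp.out.two_le
    have hpa : 1 ≤ p ^ a := Nat.one_le_pow _ _ hp.out.pos
    have hps : p ^ (a + 1) = p * p ^ a := pow_succ' p a
    have hle : p ≤ p * p ^ a := Nat.le_mul_of_pos_right _ hpa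
    have e : p * (p ^ a - 1) = p * p ^ a - p := by rw [Nat.mul_sub, mul_one]
    have hsplit : p ^ (a + 1) - 1 = p * (p ^ a - 1) + (p - 1) := by
      rw [hps, e]; omega
    have hmod : (p ^ (a + 1) - 1) % p = p - 1 := by
      rw [hsplit, Nat.mul_add_mod, Nat.mod_eq_of_lt (by omega)]
    have hdiv : (p ^ (a + 1) - 1) / p = p ^ a - 1 := by
      rw [hsplit, Nat.mul_add_div hp.out.pos, Nat.div_eq_of_lt (by omega)]; omega
    have lucas := Choose.choose_modEq_choose_mod_mul_choose_div
      (p := p) (n := p ^ (a + 1) - 1) (k := k)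
    rw [hmod, hdiv] at lucas
    have hc : ((Nat.choose (p ^ (a + 1) - 1) k : ℤ) : ZMod p)
        = ((Nat.choose (p - 1) (k % p) * Nat.choose (p ^ a - 1) (k / p) : ℤ) : ZMod p) := by
      exact_mod_cast (ZMod.intCast_eq_intCast_iff _ _ _).mpr lucas
    push_cast at hc
    rw [hc, aux_choose_prime_sub_one p _ (Nat.mod_lt _ hp.out.pos),
      ih _ (Nat.div_lt_of_lt_mul (by rw [← hps]; exact hk))]
    conv_rhs => rw [← Nat.div_add_mod k p, pow_add, pow_mul]
    rw [hodd.neg_one_pow]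
    ring

/-- `x ^ ((p^a-1)/2) = (x ^ (p/2)) ^ a` in `ZMod p` for odd prime `p`. -/
theorem aux_pow_half_pow (p : ℕ) [hp : Fact p.Prime] (hodd : Odd p) (x : ZMod p) :
    ∀ a : ℕ, x ^ ((p ^ a - 1) / 2) = (x ^ (p / 2)) ^ a := by
  intro a
  induction a with
  | zero => simp
  | succ a ih =>
    obtain ⟨u, hu⟩ := Odd.pow (n := a) hodd
    obtain ⟨v, hv⟩ := hodd
    have hps : p ^ (a + 1) = p * p ^ a := pow_succ' p a
    have hu2 : (p ^ a - 1) / 2 = u := by omega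
    have hv2 : p / 2 = v := by omega
    have harith : (p ^ (a + 1) - 1) / 2 = p * u + v := by
      have h1 : p ^ (a + 1) = 2 * (p * u + v) + 1 := by rw [hps, hu, hv]; ring
      set w := p * u + v
      omega
    rw [harith, pow_add, pow_mul, ZMod.pow_card, pow_succ, ← ih, hu2, hv2]

/-- The key congruence: `J(-m | p^a) * m^n ≡ C(2n, n) mod p` where `2n + 1 = p^a`. -/
theorem aux_key_dvd (p : ℕ) [hp : Fact p.Prime] (hodd : Odd p) (a : ℕ) (m : ℤ)
    (hm : ¬ ((p : ℤ) ∣ m)) (n : ℕ) (hn : 2 * n + 1 = p ^ a) :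
    (p : ℤ) ∣ (jacobiSym (-m) (p ^ a) * m ^ n - (Nat.choose (2 * n) n : ℤ)) := by
  rw [← ZMod.intCast_zmod_eq_zero_iff_dvd]
  have h2n : 2 * n = p ^ a - 1 := by omega
  have hnlt : n < p ^ a := by omega
  have hn2 : n = (p ^ a - 1) / 2 := by omega
  have hm0 : (m : ZMod p) ≠ 0 := by
    rwa [Ne, ZMod.intCast_zmod_eq_zero_iff_dvd]
  push_cast
  rw [sub_eq_zero]
  have hC : ((Nat.choose (2 * n) n : ℕ) : ZMod p) = (-1) ^ n := by
    rw [h2n]; exact aux_choose_prime_pow_sub_one p hodd a n hnlt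
  have hJ : jacobiSym (-m) (p ^ a) = (legendreSym p (-m)) ^ a := by
    rw [jacobiSym.pow_right, jacobiSym.legendreSym.to_jacobiSym]
  have hp12 : p / 2 * 2 = p - 1 := by
    obtain ⟨v, hv⟩ := hodd; omega
  have hmn : (m : ZMod p) ^ n = ((m : ZMod p) ^ (p / 2)) ^ a := by
    rw [hn2]; exact aux_pow_half_pow p hodd _ a
  have hneg : ((-1 : ZMod p)) ^ n = ((-1 : ZMod p) ^ (p / 2)) ^ a := by
    rw [hn2]; exact aux_pow_half_pow p hodd _ a
  have hL : ((legendreSym p (-m) : ℤ) : ZMod p) = (-(m : ZMod p)) ^ (p / 2) := by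
    rw [legendreSym.eq_pow]; push_cast; ring_nf
  calc ((jacobiSym (-m) (p ^ a) : ℤ) : ZMod p) * (m : ZMod p) ^ n
      = (((legendreSym p (-m) : ℤ) : ZMod p)) ^ a * ((m : ZMod p) ^ (p / 2)) ^ a := by
        rw [hJ, hmn]; push_cast; ring
    _ = ((-(m : ZMod p)) ^ (p / 2) * (m : ZMod p) ^ (p / 2)) ^ a := by rw [hL]; ring
    _ = ((-1 : ZMod p) ^ (p / 2) * ((m : ZMod p) ^ 2) ^ (p / 2)) ^ a := by
        rw [← mul_pow, ← mul_pow]; ring_nf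
    _ = ((-1 : ZMod p) ^ (p / 2)) ^ a := by
        rw [← pow_mul, mul_comm 2 (p / 2), hp12, ZMod.pow_card_sub_one_eq_one hm0, mul_one]
    _ = ((Nat.choose (2 * n) n : ℕ) : ZMod p) := by rw [hC, hneg]

theorem sum_mul_central_binom_half (p : ℕ) (hp : p.Prime) (hp2 : p ≠ 2)
    (a : ℕ) (ha : 0 < a) (m : ℤ) (hm : ¬ ((p : ℤ) ∣ m)) :
    ratModCast p (a + 1)
      (((m : ℚ) - 4) / 2 *
        ∑ k ∈ Finset.range ((p ^ a - 1) / 2 + 1),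
          (k : ℚ) * (Nat.choose (2 * k) k : ℚ) / (m : ℚ) ^ k)
      ((∑ k ∈ Finset.range ((p ^ a - 1) / 2 + 1),
          (Nat.choose (2 * k) k : ℚ) / (m : ℚ) ^ k)
        - (p : ℚ) ^ a * (jacobiSym (-m) (p ^ a) : ℚ)) := by
  haveI : Fact p.Prime := ⟨hp⟩
  have hodd : Odd p := hp.odd_of_ne_two hp2
  have hq : Odd (p ^ a) := hodd.pow
  set n : ℕ := (p ^ a - 1) / 2 with hn
  have hpa1 : 1 ≤ p ^ a := Nat.one_le_pow _ _ hp.pos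
  have hn1 : 2 * n + 1 = p ^ a := by
    obtain ⟨t, ht⟩ := hq; omega
  have hm0' : m ≠ 0 := by rintro rfl; exact hm (dvd_zero _)
  have hm0 : (m : ℚ) ≠ 0 := Int.cast_ne_zero.mpr hm0'
  have hmn : (m : ℚ) ^ n ≠ 0 := pow_ne_zero _ hm0
  have tel := aux_telescope (m : ℚ) hm0 n
  obtain ⟨E, hE⟩ := aux_key_dvd p hodd a m hm n hn1
  refine ⟨(E : ℚ) / ((m : ℚ)) ^ n, ?_, ?_⟩
  · have hEq' : (jacobiSym (-m) (p ^ a) : ℚ) - (Nat.choose (2 * n) n : ℚ) / (m : ℚ) ^ n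
        = (p : ℚ) * (E : ℚ) / (m : ℚ) ^ n := by
      have hEc : (jacobiSym (-m) (p ^ a) : ℚ) * (m : ℚ) ^ n - (Nat.choose (2 * n) n : ℚ)
          = (p : ℚ) * (E : ℚ) := by exact_mod_cast congrArg (fun t : ℤ => (t : ℚ)) hE
      field_simp
      linear_combination hEc
    have h2n1 : ((2 : ℚ) * (n : ℚ) + 1) = (p : ℚ) ^ a := by
      exact_mod_cast congrArg (Nat.cast (R := ℚ)) hn1
    linear_combination (-1 : ℚ) * tel + (p : ℚ) ^ a * hEq'
      - ((Nat.choose (2 * n) n : ℚ) / (m : ℚ) ^ n) * h2n1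
  · intro hpd
    have h1 := Rat.den_dvd E (m ^ n)
    rw [Rat.divInt_eq_div] at h1
    have h2 : ((E : ℚ) / ((m ^ n : ℤ) : ℚ)) = (E : ℚ) / ((m : ℚ)) ^ n := by push_cast; ring
    rw [h2] at h1
    have h3 : (p : ℤ) ∣ m ^ n :=
      dvd_trans (Int.natCast_dvd_natCast.mpr hpd) h1
    exact hm ((Nat.prime_iff_prime_int.mp hp).dvd_of_dvd_pow h3)
end

section
/- Let p be an odd prime, a a positive integer, and m an integer not divisible by p. Then ((m−4)/2)·∑_{k=0}^{p^a−1} k·C(2k,k)/m^k ≡ ∑_{k=0}^{p^a−1} C(2k,k)/m^k − p^a (mod p^{a+1}), where the congruence is between rational numbers whose denominators are coprime to p (i.e., it holds in the localization ℤ_(p)). -/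
lemma tele (m : ℚ) (hm : m ≠ 0) : ∀ n : ℕ,
    (m - 4) / 2 * (∑ k ∈ Finset.range n, (k : ℚ) * (Nat.choose (2 * k) k : ℚ) / m ^ k)
      - ∑ k ∈ Finset.range n, (Nat.choose (2 * k) k : ℚ) / m ^ k
    = -(m / 2) * n * (Nat.choose (2 * n) n : ℚ) / m ^ n := by
  intro n
  induction n with
  | zero => simp
  | succ n ih =>
    have key : ((n : ℚ) + 1) * (Nat.choose (2 * (n + 1)) (n + 1) : ℚ)
        = 2 * (2 * n + 1) * (Nat.choose (2 * n) n : ℚ) := by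
      have := Nat.succ_mul_centralBinom_succ n
      rw [Nat.centralBinom, Nat.centralBinom] at this
      exact_mod_cast this
    have key3 : -(m / 2) * ((n : ℚ) + 1) * (Nat.choose (2 * (n + 1)) (n + 1) : ℚ) / m
        = -(2 * (n : ℚ) + 1) * (Nat.choose (2 * n) n : ℚ) := by
      field_simp
      linear_combination -key
    rw [Finset.sum_range_succ, Finset.sum_range_succ]
    push_cast
    rw [pow_succ, mul_comm (m ^ n) m, ← div_div, key3]
    linear_combination ih

lemma binom_two (p : ℕ) (hp : p.Prime) : ∀ a : ℕ, Nat.choose (2 * p ^ a) (p ^ a) ≡ 2 [MOD p] := by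
  haveI : Fact p.Prime := ⟨hp⟩
  intro a
  induction a with
  | zero => simp; rfl
  | succ a ih =>
    have h := Choose.choose_modEq_choose_mod_mul_choose_div_nat
      (n := 2 * p ^ (a + 1)) (k := p ^ (a + 1)) (p := p)
    have hp0 : 0 < p := hp.pos
    have h1 : 2 * p ^ (a + 1) % p = 0 := by
      simp [Nat.mul_mod, Nat.pow_mod, Nat.mod_self]
    have h2 : p ^ (a + 1) % p = 0 := by
      simp [Nat.pow_mod, Nat.mod_self]
    have h3 : 2 * p ^ (a + 1) / p = 2 * p ^ a := by
      rw [pow_succ, ← mul_assoc, Nat.mul_div_cancel _ hp0]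
    have h4 : p ^ (a + 1) / p = p ^ a := by
      rw [pow_succ, Nat.mul_div_cancel _ hp0]
    rw [h1, h2, h3, h4] at h
    simp at h
    exact h.trans ih

lemma fermat_pow (p : ℕ) (hp : p.Prime) (a : ℕ) (m : ℤ) (hm : ¬ ((p : ℤ) ∣ m)) :
    ((m : ZMod p)) ^ (p ^ a - 1) = 1 := by
  haveI : Fact p.Prime := ⟨hp⟩
  have hm0 : (m : ZMod p) ≠ 0 := by
    rwa [Ne, ZMod.intCast_zmod_eq_zero_iff_dvd]
  obtain ⟨s, hs⟩ := Nat.sub_dvd_pow_sub_pow p 1 a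
  rw [one_pow] at hs
  rw [hs, pow_mul, ZMod.pow_card_sub_one_eq_one hm0, one_pow]

theorem sum_mul_central_binom_full (p : ℕ) (hp : p.Prime) (hp2 : p ≠ 2)
    (a : ℕ) (ha : 0 < a) (m : ℤ) (hm : ¬ ((p : ℤ) ∣ m)) :
    ratModCast p (a + 1)
      (((m : ℚ) - 4) / 2 *
        ∑ k ∈ Finset.range (p ^ a),
          (k : ℚ) * (Nat.choose (2 * k) k : ℚ) / (m : ℚ) ^ k)
      ((∑ k ∈ Finset.range (p ^ a),
          (Nat.choose (2 * k) k : ℚ) / (m : ℚ) ^ k) - (p : ℚ) ^ a) := by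
  haveI : Fact p.Prime := ⟨hp⟩
  set n := p ^ a with hn
  have hm0 : m ≠ 0 := by rintro rfl; exact hm (dvd_zero _)
  have hmQ : (m : ℚ) ≠ 0 := Int.cast_ne_zero.mpr hm0
  have hA : ((m : ℚ)) ^ (n - 1) ≠ 0 := pow_ne_zero _ hmQ
  have h2A : 2 * ((m : ℚ)) ^ (n - 1) ≠ 0 := by positivity
  have hn1 : 1 ≤ n := Nat.one_le_pow _ _ hp.pos
  -- divisibility fact
  have hdvd : (p : ℤ) ∣ 2 * m ^ (n - 1) - (Nat.choose (2 * n) n : ℤ) := by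
    rw [← ZMod.intCast_zmod_eq_zero_iff_dvd]
    push_cast
    rw [fermat_pow p hp a m hm]
    have hb : ((Nat.choose (2 * n) n : ℕ) : ZMod p) = ((2 : ℕ) : ZMod p) :=
      (ZMod.natCast_eq_natCast_iff _ _ _).mpr (binom_two p hp a)
    push_cast at hb
    rw [hb]
    ring
  obtain ⟨c, hc⟩ := hdvd
  have hcQ : 2 * ((m : ℚ)) ^ (n - 1) - (Nat.choose (2 * n) n : ℚ) = (p : ℚ) * c := by
    exact_mod_cast hc
  refine ⟨(c : ℚ) / (2 * ((m : ℚ)) ^ (n - 1)), ?_, ?_⟩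
  · have ht := tele (m : ℚ) hmQ n
    have hmn : ((m : ℚ)) ^ n = ((m : ℚ)) ^ (n - 1) * (m : ℚ) := by
      rw [← pow_succ]
      congr 1
      omega
    have ht2 : ((m : ℚ) - 4) / 2 *
          (∑ k ∈ Finset.range n, (k : ℚ) * (Nat.choose (2 * k) k : ℚ) / (m : ℚ) ^ k)
        - ∑ k ∈ Finset.range n, (Nat.choose (2 * k) k : ℚ) / (m : ℚ) ^ k
        = -((n : ℚ) * (Nat.choose (2 * n) n : ℚ)) / (2 * ((m : ℚ)) ^ (n - 1)) := by
      rw [ht, hmn, div_eq_div_iff (by simp [hA, hmQ]) h2A]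
      ring
    have hpa : ((p : ℚ)) ^ a = (n : ℚ) := by rw [hn]; push_cast; ring
    rw [pow_succ, hpa, ← mul_div_assoc, eq_div_iff h2A]
    rw [eq_div_iff h2A] at ht2
    linear_combination ht2 + (n : ℚ) * hcQ
  · intro hpd
    set z : ℚ := (c : ℚ) / (2 * ((m : ℚ)) ^ (n - 1)) with hz
    have hzd : z = Rat.divInt c (2 * m ^ (n - 1)) := by
      rw [Rat.divInt_eq_div, hz]
      push_cast
      ring_nf
    have hden : ((z.den : ℤ)) ∣ 2 * m ^ (n - 1) := by
      rw [hzd]; exact Rat.den_dvd _ _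
    have hpz : (p : ℤ) ∣ 2 * m ^ (n - 1) :=
      dvd_trans (Int.natCast_dvd_natCast.mpr hpd) hden
    have hpP : Prime (p : ℤ) := Nat.prime_iff_prime_int.mp hp
    rcases hpP.dvd_mul.mp hpz with h | h
    · have : p ∣ 2 := by exact_mod_cast h
      exact hp2 ((Nat.prime_dvd_prime_iff_eq hp Nat.prime_two).mp this)
    · exact hm (hpP.dvd_of_dvd_pow h)
end
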